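/- arXiv:1411.5450 — 2 statements merged into one kernel-verified Lean document; each statement's English description precedes it below -/
import Mathlib

section
/- Let (W,S) be a Coxeter group, J ⊆ S, and s ∈ S. If x, y ∈ W satisfy x^J ≤ y^J in the Bruhat order and sy < y, then (x')^J ≤ (sy)^J, where x' = min{x, sx}. -/
namespace Paper

open CoxeterSystem List

open scoped Classical

variable {B : Type*} {W : Type*} [Group W] {M : CoxeterMatrix B} (cs : CoxeterSystem M W)

/-- One step in the Bruhat order: multiply on the right by a reflection, increasing length. -/
def BruhatStep (cs : CoxeterSystem M W) (u v : W) : Prop :=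
  ∃ t : W, cs.IsReflection t ∧ v = u * t ∧ cs.length u < cs.length v

/-- The Bruhat order on the Coxeter group `W`. -/
def BruhatLE (cs : CoxeterSystem M W) (u v : W) : Prop :=
  Relation.ReflTransGen (BruhatStep cs) u v

/-- Strict Bruhat order. -/
def BruhatLT (cs : CoxeterSystem M W) (u v : W) : Prop :=
  BruhatLE cs u v ∧ u ≠ v

/-- The standard parabolic subgroup `W_J` generated by the simple reflections in `J`. -/
def parabolic (cs : CoxeterSystem M W) (J : Set B) : Subgroup W :=
  Subgroup.closure (cs.simple '' J)

/-- `m` is the minimal-length representative `x^J` of the coset `x W_J`. -/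
def IsMinRep (cs : CoxeterSystem M W) (J : Set B) (x m : W) : Prop :=
  x⁻¹ * m ∈ parabolic cs J ∧
    ∀ y : W, x⁻¹ * y ∈ parabolic cs J → cs.length m ≤ cs.length y


/-- The basic sign-toggling map on `W × ℤˣ`. -/
noncomputable def tog (i : B) : W × ℤˣ → W × ℤˣ :=
  fun p => (cs.simple i * p.1 * cs.simple i, if p.1 = cs.simple i then -p.2 else p.2)

lemma simple_conj_cancel (i : B) (a : W) :
    cs.simple i * (cs.simple i * a * cs.simple i) * cs.simple i = a := by
  have := cs.simple_mul_simple_cancel_left (w := a * cs.simple i) i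
  calc cs.simple i * (cs.simple i * a * cs.simple i) * cs.simple i
      = cs.simple i * (cs.simple i * (a * cs.simple i)) * cs.simple i := by
        simp [mul_assoc]
    _ = a * cs.simple i * cs.simple i := by rw [this]
    _ = a := cs.simple_mul_simple_cancel_right i

lemma simple_conj_eq_iff (i : B) (a b : W) :
    cs.simple i * a * cs.simple i = b ↔ a = cs.simple i * b * cs.simple i := by
  constructor
  · rintro rfl
    exact (simple_conj_cancel cs i a).symm
  · rintro rfl
    exact simple_conj_cancel cs i b

lemma tog_involutive (i : B) : Function.Involutive (tog cs i) := by
  rintro ⟨t, e⟩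
  by_cases hp : t = cs.simple i
  · subst hp
    simp [tog, cs.simple_mul_simple_cancel_right]
  · have h1 := simple_conj_cancel cs i t
    have h2 : (cs.simple i * t * cs.simple i = cs.simple i) ↔ (t = cs.simple i) := by
      rw [simple_conj_eq_iff]
      simp [cs.simple_mul_simple_cancel_left]
    simp [tog, hp, h1, h2]

/-- The sign-toggling permutation. -/
noncomputable def togP (i : B) : Equiv.Perm (W × ℤˣ) := (tog_involutive cs i).toPerm

lemma togP_apply (i : B) (p : W × ℤˣ) :
    togP cs i p = (cs.simple i * p.1 * cs.simple i, if p.1 = cs.simple i then -p.2 else p.2) :=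
  rfl


lemma togP_apply' (i : B) (p : W × ℤˣ) :
    togP cs i p = (cs.simple i * p.1 * cs.simple i,
      p.2 * (if p.1 = cs.simple i then -1 else 1)) := by
  rw [togP_apply]
  by_cases hp : p.1 = cs.simple i <;> simp [hp]

/-- The sequence of elements whose sign gets flipped. -/
noncomputable def flipL (i i' : B) (m : ℕ) : List W :=
  (List.range (2*m)).map
    (fun k => ((cs.simple i * cs.simple i')^k)⁻¹ * cs.simple i')

lemma simple_mul_pair_pow (i i' : B) (k : ℕ) :
    cs.simple i' * (cs.simple i * cs.simple i')^k
      = ((cs.simple i * cs.simple i')^k)⁻¹ * cs.simple i' := by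
  induction k with
  | zero => simp
  | succ k ih =>
    have h1 : cs.simple i' * (cs.simple i * cs.simple i')
        = (cs.simple i * cs.simple i')⁻¹ * cs.simple i' := by
      rw [mul_inv_rev, cs.inv_simple, cs.inv_simple]
      rw [← mul_assoc]
    rw [pow_succ' (cs.simple i * cs.simple i') k, ← mul_assoc, h1, mul_assoc, ih,
      ← mul_assoc, ← mul_inv_rev]
    rw [pow_mul_comm']

lemma togP_pair_pow (i i' : B) (m : ℕ) (p : W × ℤˣ) :
    ((togP cs i * togP cs i')^m) p
      = ((cs.simple i * cs.simple i')^m * p.1 * ((cs.simple i * cs.simple i')^m)⁻¹,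
          p.2 * (-1)^(List.count p.1 (flipL cs i i' m))) := by
  induction m with
  | zero => simp [flipL]
  | succ m ih =>
    set s1 := cs.simple i with hs1
    set s2 := cs.simple i' with hs2
    set σ := s1 * s2 with hσ
    have key2m : s2 * σ^m = (σ^m)⁻¹ * s2 := by
      rw [hσ, hs1, hs2]; exact simple_mul_pair_pow cs i i' m
    have hinvrev : σ⁻¹ = s2 * s1 := by
      rw [hσ, hs1, hs2, mul_inv_rev, cs.inv_simple, cs.inv_simple]
    have hA : (σ^m)⁻¹ * s2 * σ^m = (σ^(2*m))⁻¹ * s2 := by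
      rw [mul_assoc, key2m]
      rw [show 2*m = m + m by ring]
      group
    have hB : (σ^m)⁻¹ * (s2 * s1 * s2) * σ^m = (σ^(2*m+1))⁻¹ * s2 := by
      have h2 : s2 * s1 * s2 = σ⁻¹ * s2 := by rw [hinvrev]
      rw [h2, mul_assoc, mul_assoc, key2m]
      rw [show 2*m+1 = m + 1 + m by ring]
      group
    have hcount : List.count p.1 (flipL cs i i' (m+1))
        = List.count p.1 (flipL cs i i' m)
          + ((if p.1 = (σ^(2*m))⁻¹ * s2 then 1 else 0)
            + (if p.1 = (σ^(2*m+1))⁻¹ * s2 then 1 else 0)) := by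
      have h21 : 2*(m+1) = (2*m + 1) + 1 := by ring
      rw [flipL, h21, List.range_succ, List.range_succ]
      simp only [List.map_append, List.count_append, List.map_cons, List.map_nil, flipL]
      rw [List.count_singleton', List.count_singleton']
      rw [add_assoc]
      simp only [@eq_comm _ p.1]
      rfl
    rw [pow_succ' (togP cs i * togP cs i') m]
    rw [Equiv.Perm.mul_apply, ih, Equiv.Perm.mul_apply (togP cs i)]
    rw [togP_apply' cs i']
    rw [togP_apply' cs i]
    simp only [← hs1, ← hs2, ← hσ]
    set q1 := σ^m * p.1 * (σ^m)⁻¹ with hq1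
    have hcond1 : (q1 = s2) ↔ (p.1 = (σ^(2*m))⁻¹ * s2) := by
      rw [hq1, ← hA]
      constructor
      · intro h
        rw [← h]; group
      · intro h
        rw [h]; group
    have hcond2 : (s2 * q1 * s2 = s1) ↔ (p.1 = (σ^(2*m+1))⁻¹ * s2) := by
      have hiff : (s2 * q1 * s2 = s1) ↔ (q1 = s2 * s1 * s2) := by
        constructor
        · intro h
          rw [← h, hs2]
          exact (simple_conj_cancel cs i' _).symm
        · intro h
          rw [h, hs2]
          exact simple_conj_cancel cs i' s1
      rw [hiff, hq1, ← hB]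
      constructor
      · intro h
        rw [← h]; group
      · intro h
        rw [h]; group
    have hfst : s1 * (s2 * q1 * s2) * s1 = σ^(m+1) * p.1 * (σ^(m+1))⁻¹ := by
      rw [hq1, pow_succ' σ m, mul_inv_rev (σ) (σ^m)]
      rw [show (σ)⁻¹ = s2 * s1 from hinvrev]
      rw [hσ]
      simp only [mul_assoc]
    have hsnd : (p.2 * (-1) ^ List.count p.1 (flipL cs i i' m) * (if q1 = s2 then -1 else 1))
        * (if s2 * q1 * s2 = s1 then -1 else 1)
        = p.2 * (-1) ^ List.count p.1 (flipL cs i i' (m+1)) := by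
      rw [hcount]
      simp only [hcond1, hcond2]
      by_cases h1 : p.1 = (σ^(2*m))⁻¹ * s2 <;>
        by_cases h2 : p.1 = (σ^(2*m+1))⁻¹ * s2 <;>
          simp [h1, h2, pow_add, mul_assoc]
    rw [Prod.mk.injEq]
    exact ⟨hfst, hsnd⟩

lemma togP_liftable : M.IsLiftable (fun i => togP cs i) := by
  intro i i'
  apply Equiv.ext
  intro p
  rw [show ((fun i => togP cs i) i * (fun i => togP cs i) i') = togP cs i * togP cs i' from rfl]
  rw [togP_pair_pow cs i i' (M i i') p]
  have hσm : (cs.simple i * cs.simple i')^(M i i') = 1 := cs.simple_mul_simple_pow i i'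
  have hcnt : List.count p.1 (flipL cs i i' (M i i'))
      = 2 * List.count p.1 (((List.range (M i i')).map
        (fun k => ((cs.simple i * cs.simple i')^k)⁻¹ * cs.simple i'))) := by
    rw [flipL, two_mul, List.range_add, List.map_append, List.count_append, List.map_map]
    have hco : ((fun k => ((cs.simple i * cs.simple i')^k)⁻¹ * cs.simple i') ∘ (M i i' + ·))
        = (fun k => ((cs.simple i * cs.simple i')^k)⁻¹ * cs.simple i') := by
      funext k
      simp only [Function.comp_apply]
      rw [pow_add, hσm, one_mul]
    rw [hco, two_mul]
  rw [hcnt, pow_mul, hσm]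
  simp


/-- The sign representation of the Coxeter group. -/
noncomputable def Phi : W →* Equiv.Perm (W × ℤˣ) :=
  cs.lift ⟨fun i => togP cs i, togP_liftable cs⟩

lemma Phi_simple (i : B) : Phi cs (cs.simple i) = togP cs i :=
  cs.lift_apply_simple (togP_liftable cs) i

lemma Phi_wordProd (ω : List B) (p : W × ℤˣ) :
    Phi cs (cs.wordProd ω) p
      = (cs.wordProd ω * p.1 * (cs.wordProd ω)⁻¹,
          p.2 * (-1)^(List.count p.1 (cs.rightInvSeq ω))) := by
  induction ω generalizing p with
  | nil => simp [cs.wordProd_nil]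
  | cons i ω ih =>
    rw [cs.wordProd_cons, map_mul, Equiv.Perm.mul_apply, ih, Phi_simple, togP_apply']
    have hris : cs.rightInvSeq (i :: ω)
        = ((cs.wordProd ω)⁻¹ * cs.simple i * cs.wordProd ω) :: cs.rightInvSeq ω := rfl
    have hcond : (cs.wordProd ω * p.1 * (cs.wordProd ω)⁻¹ = cs.simple i)
        ↔ (p.1 = (cs.wordProd ω)⁻¹ * cs.simple i * cs.wordProd ω) := by
      constructor
      · intro h; rw [← h]; group
      · intro h; rw [h]; group
    rw [Prod.mk.injEq]
    constructor
    · rw [mul_inv_rev, cs.inv_simple]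
      group
    · rw [hris]
      by_cases h : p.1 = (cs.wordProd ω)⁻¹ * cs.simple i * cs.wordProd ω
      · rw [if_pos (hcond.mpr h)]
        have hcnt : List.count p.1
            (((cs.wordProd ω)⁻¹ * cs.simple i * cs.wordProd ω) :: cs.rightInvSeq ω)
            = List.count p.1 (cs.rightInvSeq ω) + 1 := by
          simp [List.count_cons, h.symm]
        rw [hcnt, pow_add, pow_one, mul_assoc]
      · rw [if_neg (fun hc => h (hcond.mp hc))]
        have hcnt : List.count p.1
            (((cs.wordProd ω)⁻¹ * cs.simple i * cs.wordProd ω) :: cs.rightInvSeq ω)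
            = List.count p.1 (cs.rightInvSeq ω) := by
          simp [List.count_cons, Ne.symm h]
        rw [hcnt, mul_one]

/-- The sign of `t` relative to `w`: equals `-1` iff `t` is a right inversion of `w`. -/
noncomputable def sgn (w t : W) : ℤˣ := (Phi cs w (t, 1)).2

lemma sgn_wordProd (ω : List B) (t : W) :
    sgn cs (cs.wordProd ω) t = (-1)^(List.count t (cs.rightInvSeq ω)) := by
  unfold sgn
  rw [Phi_wordProd]
  simp

lemma Phi_apply (w : W) (p : W × ℤˣ) :
    Phi cs w p = (w * p.1 * w⁻¹, p.2 * sgn cs w p.1) := by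
  obtain ⟨ω, -, rfl⟩ := cs.exists_reduced_word' w
  rw [Phi_wordProd, sgn_wordProd]

lemma sgn_simple_self (i : B) : sgn cs (cs.simple i) (cs.simple i) = -1 := by
  have h := sgn_wordProd cs [i] (cs.simple i)
  rw [cs.wordProd_singleton] at h
  rw [h]
  have hris : cs.rightInvSeq [i] = [cs.simple i] := by
    simp [CoxeterSystem.rightInvSeq]
  rw [hris]
  simp

lemma sgn_refl_self {t : W} (ht : cs.IsReflection t) : sgn cs t t = -1 := by
  obtain ⟨w, i, rfl⟩ := ht
  have hconj : w⁻¹ * (w * cs.simple i * w⁻¹) * w⁻¹⁻¹ = cs.simple i := by group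
  have h1 : Phi cs w⁻¹ (w * cs.simple i * w⁻¹, (1:ℤˣ))
      = (cs.simple i, sgn cs w⁻¹ (w * cs.simple i * w⁻¹)) := by
    rw [Phi_apply, hconj, one_mul]
  have hii : Phi cs w (Phi cs w⁻¹ (w * cs.simple i * w⁻¹, (1:ℤˣ)))
      = (w * cs.simple i * w⁻¹, (1:ℤˣ)) := by
    rw [← Equiv.Perm.mul_apply, ← map_mul, mul_inv_cancel, map_one, Equiv.Perm.one_apply]
  have hkey : sgn cs w⁻¹ (w * cs.simple i * w⁻¹) * sgn cs w (cs.simple i) = 1 := by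
    rw [h1, Phi_apply] at hii
    have := congrArg Prod.snd hii
    simpa using this
  have h2 : Phi cs (cs.simple i) (cs.simple i, sgn cs w⁻¹ (w * cs.simple i * w⁻¹))
      = (cs.simple i, -(sgn cs w⁻¹ (w * cs.simple i * w⁻¹))) := by
    rw [Phi_apply, sgn_simple_self]
    dsimp only
    rw [Prod.mk.injEq]
    constructor
    · group
    · rw [mul_neg, mul_one]
  have hPhit : Phi cs (w * cs.simple i * w⁻¹) (w * cs.simple i * w⁻¹, (1:ℤˣ))
      = (w * cs.simple i * w⁻¹,
          -(sgn cs w⁻¹ (w * cs.simple i * w⁻¹) * sgn cs w (cs.simple i))) := by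
    rw [map_mul, map_mul, Equiv.Perm.mul_apply, Equiv.Perm.mul_apply, h1, h2, Phi_apply]
    dsimp only
    rw [Prod.mk.injEq]
    exact ⟨rfl, neg_mul _ _⟩
  unfold sgn
  rw [hPhit, hkey]

lemma sgn_mul_refl {t : W} (ht : cs.IsReflection t) (w : W) :
    sgn cs (w * t) t = - sgn cs w t := by
  unfold sgn
  rw [map_mul, Equiv.Perm.mul_apply]
  have h1 : Phi cs t (t, (1:ℤˣ)) = (t, -1) := by
    rw [Phi_apply]
    dsimp only
    rw [Prod.mk.injEq]
    constructor
    · group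
    · rw [one_mul]
      exact sgn_refl_self cs ht
  rw [h1, Phi_apply]
  simp [sgn]

lemma mem_rightInvSeq_of_sgn {ω : List B} {t : W} (h : sgn cs (cs.wordProd ω) t = -1) :
    t ∈ cs.rightInvSeq ω := by
  rw [sgn_wordProd] at h
  by_cases hc : List.count t (cs.rightInvSeq ω) = 0
  · rw [hc, pow_zero] at h
    exact absurd h (by decide)
  · exact List.count_pos_iff.mp (Nat.pos_of_ne_zero hc)

lemma length_mul_refl_lt_of_sgn {t : W} (ht : cs.IsReflection t) {w : W}
    (h : sgn cs w t = -1) : cs.length (w * t) < cs.length w := by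
  obtain ⟨ω, hω, rfl⟩ := cs.exists_reduced_word' w
  exact (cs.isRightInversion_of_mem_rightInvSeq hω (mem_rightInvSeq_of_sgn cs h)).2

lemma sgn_eq_neg_one_of_length_lt {t : W} (ht : cs.IsReflection t) {w : W}
    (h : cs.length (w * t) < cs.length w) : sgn cs w t = -1 := by
  rcases Int.units_eq_one_or (sgn cs w t) with h1 | h1
  · exfalso
    have h2 : sgn cs (w * t) t = -1 := by rw [sgn_mul_refl cs ht, h1]
    have h3 := length_mul_refl_lt_of_sgn cs ht h2
    rw [mul_assoc, ht.mul_self, mul_one] at h3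
    omega
  · exact h1

/-- The strong exchange property. -/
lemma strong_exchange_right {t w : W} (ht : cs.IsReflection t)
    (hlt : cs.length (w * t) < cs.length w) {ω : List B} (hω : cs.wordProd ω = w) :
    ∃ j, ∃ hj : j < ω.length, w * t = cs.wordProd (ω.eraseIdx j) := by
  subst hω
  have hs : sgn cs (cs.wordProd ω) t = -1 := sgn_eq_neg_one_of_length_lt cs ht hlt
  have hmem := mem_rightInvSeq_of_sgn cs hs
  obtain ⟨j, hj, hjt⟩ := List.mem_iff_getElem.mp hmem
  rw [cs.length_rightInvSeq] at hj
  refine ⟨j, hj, ?_⟩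
  have := cs.wordProd_mul_getD_rightInvSeq ω j
  rw [List.getD_eq_getElem _ _ (by rw [cs.length_rightInvSeq]; exact hj), hjt] at this
  exact this

/-- Strong exchange, phrased via a splitting of the word. -/
lemma strong_exchange_right' {t w : W} (ht : cs.IsReflection t)
    (hlt : cs.length (w * t) < cs.length w) {ω : List B} (hω : cs.wordProd ω = w) :
    ∃ l₁ l₂ c, ω = l₁ ++ c :: l₂ ∧ w * t = cs.wordProd (l₁ ++ l₂) := by
  obtain ⟨j, hj, he⟩ := strong_exchange_right cs ht hlt hω
  refine ⟨ω.take j, ω.drop (j+1), ω[j], ?_, ?_⟩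
  · have h2 : ω.drop j = ω[j] :: ω.drop (j+1) := List.drop_eq_getElem_cons hj
    rw [← h2]
    exact (List.take_append_drop j ω).symm
  · rw [he, List.eraseIdx_eq_take_drop_succ]

/-- Strong exchange, left-handed version. -/
lemma strong_exchange_left {t w : W} (ht : cs.IsReflection t)
    (hlt : cs.length (t * w) < cs.length w) {ω : List B} (hω : cs.wordProd ω = w) :
    ∃ l₁ l₂ c, ω = l₁ ++ c :: l₂ ∧ t * w = cs.wordProd (l₁ ++ l₂) := by
  have hrev : cs.wordProd ω.reverse = w⁻¹ := by rw [cs.wordProd_reverse, hω]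
  have hlen : cs.length (w⁻¹ * t) < cs.length w⁻¹ := by
    have he : w⁻¹ * t = (t * w)⁻¹ := by rw [mul_inv_rev, ht.inv]
    rw [he, cs.length_inv, cs.length_inv]
    exact hlt
  obtain ⟨l₁, l₂, c, hsplit, hprod⟩ := strong_exchange_right' cs ht hlen hrev
  refine ⟨l₂.reverse, l₁.reverse, c, ?_, ?_⟩
  · have := congrArg List.reverse hsplit
    rw [List.reverse_reverse] at this
    rw [this]
    simp
  · have : t * w = (w⁻¹ * t)⁻¹ := by rw [mul_inv_rev, ht.inv]; group
    rw [this, hprod, ← cs.wordProd_reverse]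
    simp


/-! ### Basic properties of the Bruhat order -/

lemma bruhatLE_refl (w : W) : BruhatLE cs w w := Relation.ReflTransGen.refl

lemma bruhatLE_trans {u v w : W} (h1 : BruhatLE cs u v) (h2 : BruhatLE cs v w) :
    BruhatLE cs u w := Relation.ReflTransGen.trans h1 h2

lemma le_mul_refl {w t : W} (ht : cs.IsReflection t)
    (h : cs.length w < cs.length (w * t)) : BruhatLE cs w (w * t) :=
  Relation.ReflTransGen.single ⟨t, ht, rfl, h⟩

lemma mul_refl_le {w t : W} (ht : cs.IsReflection t)
    (h : cs.length (w * t) < cs.length w) : BruhatLE cs (w * t) w := by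
  refine Relation.ReflTransGen.single ⟨t, ht, ?_, ?_⟩
  · rw [mul_assoc, ht.mul_self, mul_one]
  · exact h

lemma isReflection_conj_left (i : B) (w : W) :
    cs.IsReflection (w⁻¹ * cs.simple i * w) := by
  have := (cs.isReflection_simple i).conj w⁻¹
  rwa [inv_inv] at this

lemma le_simple_mul {w : W} {i : B}
    (h : cs.length w < cs.length (cs.simple i * w)) :
    BruhatLE cs w (cs.simple i * w) := by
  refine Relation.ReflTransGen.single ⟨w⁻¹ * cs.simple i * w, isReflection_conj_left cs i w,
    ?_, ?_⟩
  · group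
  · exact h

lemma simple_mul_le {w : W} {i : B}
    (h : cs.length (cs.simple i * w) < cs.length w) :
    BruhatLE cs (cs.simple i * w) w := by
  refine Relation.ReflTransGen.single ⟨w⁻¹ * cs.simple i * w, isReflection_conj_left cs i w,
    ?_, ?_⟩
  · have hc : cs.simple i * w * (w⁻¹ * cs.simple i * w)
        = cs.simple i * (cs.simple i * w) := by group
    rw [hc, cs.simple_mul_simple_cancel_left]
  · exact h

lemma length_le_of_bruhatLE {u v : W} (h : BruhatLE cs u v) :
    cs.length u ≤ cs.length v := by
  induction h with
  | refl => exact le_rfl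
  | tail _ hstep ih =>
    obtain ⟨t, _, rfl, hlt⟩ := hstep
    omega

lemma length_lt_of_bruhatLE_ne {u v : W} (h : BruhatLE cs u v) (hne : u ≠ v) :
    cs.length u < cs.length v := by
  rcases h.cases_head with rfl | ⟨c, hstep, hrest⟩
  · exact absurd rfl hne
  · obtain ⟨t, _, rfl, hlt⟩ := hstep
    exact lt_of_lt_of_le hlt (length_le_of_bruhatLE cs hrest)

/-! ### Deletion property -/

lemma deletion_aux : ∀ n, ∀ ω : List B, ω.length ≤ n →
    ∃ τ, τ.Sublist ω ∧ cs.IsReduced τ ∧ cs.wordProd τ = cs.wordProd ω := by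
  intro n
  induction n with
  | zero =>
    intro ω hω
    rw [Nat.le_zero, List.length_eq_zero_iff] at hω
    subst hω
    exact ⟨[], List.Sublist.refl _, by simp [CoxeterSystem.IsReduced], rfl⟩
  | succ n IH =>
    intro ω hω
    by_cases hred : cs.IsReduced ω
    · exact ⟨ω, List.Sublist.refl _, hred, rfl⟩
    · have hP : ∃ k, ¬ cs.IsReduced (ω.take k) := by
        refine ⟨ω.length, ?_⟩
        rwa [List.take_length]
      classical
      set k := Nat.find hP with hk
      have hPk : ¬ cs.IsReduced (ω.take k) := Nat.find_spec hP
      have hk0 : k ≠ 0 := by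
        intro h0
        apply hPk
        rw [h0]
        simp [CoxeterSystem.IsReduced]
      have hkle : k ≤ ω.length := by
        by_contra hgt
        push_neg at hgt
        have := Nat.find_min hP (m := ω.length) hgt
        rw [List.take_length] at this
        exact this hred
      set j := k - 1 with hj
      have hjk : j + 1 = k := by omega
      have hjlt : j < ω.length := by omega
      have hredj : cs.IsReduced (ω.take j) := by
        by_contra hc
        have := Nat.find_min hP (m := j) (by omega)
        exact this hc
      have htake : ω.take (j+1) = ω.take j ++ [ω[j]] := by
        rw [List.take_succ]
        congr
        rw [List.getElem?_eq_getElem hjlt]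
        rfl
      have hlenj : (ω.take j).length = j := by
        rw [List.length_take]
        omega
      have hlenu : cs.length (cs.wordProd (ω.take j)) = j := by
        rw [hredj, hlenj]
      have hlt : cs.length (cs.wordProd (ω.take j) * cs.simple ω[j])
          < cs.length (cs.wordProd (ω.take j)) := by
        have hne : ¬ cs.IsReduced (ω.take (j+1)) := by
          rw [hjk]; exact hPk
        have hprod : cs.wordProd (ω.take (j+1))
            = cs.wordProd (ω.take j) * cs.simple ω[j] := by
          rw [htake, cs.wordProd_append, cs.wordProd_singleton]
        have hlen1 : (ω.take (j+1)).length = j + 1 := by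
          rw [List.length_take]; omega
        rcases cs.length_mul_simple (cs.wordProd (ω.take j)) ω[j] with hc | hc
        · exfalso
          apply hne
          rw [CoxeterSystem.IsReduced, hprod, hc, hlenu, hlen1]
        · omega
      obtain ⟨r, hr, hre⟩ := strong_exchange_right cs (cs.isReflection_simple ω[j]) hlt rfl
      set τ' := (ω.take j).eraseIdx r ++ ω.drop (j+1) with hτ'
      have hτ'prod : cs.wordProd τ' = cs.wordProd ω := by
        rw [hτ', cs.wordProd_append, ← hre]
        have h1 : cs.wordProd (ω.take j) * cs.simple ω[j] * cs.wordProd (ω.drop (j+1))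
            = cs.wordProd (ω.take (j+1)) * cs.wordProd (ω.drop (j+1)) := by
          rw [htake, cs.wordProd_append, cs.wordProd_singleton]
        rw [h1, ← cs.wordProd_append, List.take_append_drop]
      have hτ'sub : τ'.Sublist ω := by
        have h1 : ((ω.take j).eraseIdx r).Sublist (ω.take j) := List.eraseIdx_sublist ..
        have h2 : τ'.Sublist (ω.take j ++ ω.drop j) := by
          rw [hτ']
          refine List.Sublist.append h1 ?_
          have : ω.drop j = ω[j] :: ω.drop (j+1) := List.drop_eq_getElem_cons hjlt
          rw [this]
          exact List.sublist_cons_self ..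
        rwa [List.take_append_drop] at h2
      have hτ'len : τ'.length ≤ n := by
        have h1 : ((ω.take j).eraseIdx r).length + 1 = (ω.take j).length :=
          List.length_eraseIdx_add_one hr
        have h2 : (ω.drop (j+1)).length = ω.length - (j+1) := by
          rw [List.length_drop]
        rw [hτ', List.length_append]
        omega
      obtain ⟨τ, hsub, hredτ, hprodτ⟩ := IH τ' hτ'len
      exact ⟨τ, hsub.trans hτ'sub, hredτ, by rw [hprodτ, hτ'prod]⟩

lemma deletion (ω : List B) :
    ∃ τ, τ.Sublist ω ∧ cs.IsReduced τ ∧ cs.wordProd τ = cs.wordProd ω :=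
  deletion_aux cs ω.length ω le_rfl

/-! ### Subword property, `≤` direction -/

lemma exists_reduced_subword {u w : W} (h : BruhatLE cs u w) :
    ∀ ω : List B, cs.IsReduced ω → cs.wordProd ω = w →
      ∃ τ, τ.Sublist ω ∧ cs.IsReduced τ ∧ cs.wordProd τ = u := by
  induction h with
  | refl =>
    intro ω hω hprod
    exact ⟨ω, List.Sublist.refl _, hω, hprod⟩
  | tail hub hstep ih =>
    intro ω hω hprod
    obtain ⟨t, ht, rfl, hlen⟩ := hstep
    have hlt : cs.length (cs.wordProd ω * t) < cs.length (cs.wordProd ω) := by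
      rw [hprod, mul_assoc, ht.mul_self, mul_one]
      exact hlen
    obtain ⟨j, hj, he⟩ := strong_exchange_right cs ht hlt rfl
    obtain ⟨τ', hsub', hred', hprod'⟩ := deletion cs (ω.eraseIdx j)
    have hb : cs.wordProd τ' = _ := hprod'
    obtain ⟨τ, hsub, hred, hprodu⟩ := ih τ' hred' (by
      rw [hprod', ← he, hprod, mul_assoc, ht.mul_self, mul_one])
    exact ⟨τ, hsub.trans (hsub'.trans (List.eraseIdx_sublist ..)), hred, hprodu⟩

/-! ### Subword property, `≥` direction -/

lemma le_of_sublist_aux : ∀ n, ∀ ω : List B, ω.length = n → cs.IsReduced ω →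
    ∀ τ : List B, τ.Sublist ω → BruhatLE cs (cs.wordProd τ) (cs.wordProd ω) := by
  intro n
  induction n using Nat.strong_induction_on with
  | _ n IH =>
    intro ω hlen hred τ hsub
    rcases List.eq_nil_or_concat' ω with rfl | ⟨ω₀, j, rfl⟩
    · rw [List.sublist_nil.mp hsub]
      exact bruhatLE_refl cs _
    · -- ω = ω₀ ++ [j]
      have hred₀ : cs.IsReduced ω₀ := by
        have := hred.take ω₀.length
        rwa [List.take_left] at this
      have hprodw : cs.wordProd (ω₀ ++ [j]) = cs.wordProd ω₀ * cs.simple j := by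
        rw [cs.wordProd_append, cs.wordProd_singleton]
      have hup : cs.length (cs.wordProd ω₀)
          < cs.length (cs.wordProd ω₀ * cs.simple j) := by
        have h1 : cs.length (cs.wordProd (ω₀ ++ [j])) = ω₀.length + 1 := by
          rw [hred]
          simp
        have h2 : cs.length (cs.wordProd ω₀) = ω₀.length := hred₀
        rw [← hprodw, h1, h2]
        omega
      have hstepw : BruhatLE cs (cs.wordProd ω₀) (cs.wordProd (ω₀ ++ [j])) := by
        rw [hprodw]
        exact le_mul_refl cs (cs.isReflection_simple j) hup
      have hlen₀ : ω₀.length < n := by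
        rw [← hlen, List.length_append]
        simp
      -- the key "lifting along a chain" argument
      have key : ∀ u₀ : W, BruhatLE cs u₀ (cs.wordProd ω₀) →
          BruhatLE cs (u₀ * cs.simple j) (cs.wordProd ω₀ * cs.simple j) := by
        intro u₀ hle
        induction hle using Relation.ReflTransGen.head_induction_on with
        | refl => exact bruhatLE_refl cs _
        | @head a c hstep hrest ih2 =>
          obtain ⟨t, ht, rfl, hlt⟩ := hstep
          by_cases hu : cs.length (a * cs.simple j) < cs.length a
          · -- trivial case : a * s j < a ≤ ... ≤ w₀ ≤ w₀ * s j
            refine bruhatLE_trans cs (mul_refl_le cs (cs.isReflection_simple j) hu) ?_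
            refine bruhatLE_trans cs ?_ (le_mul_refl cs (cs.isReflection_simple j) hup)
            exact Relation.ReflTransGen.head ⟨t, ht, rfl, hlt⟩ hrest
          · have hu' : cs.length a < cs.length (a * cs.simple j) := by
              rcases Nat.lt_or_gt_of_ne (cs.length_mul_simple_ne a j) with hc | hc
              · exact absurd hc hu
              · exact hc
            by_cases hv : cs.length (a * t * cs.simple j) < cs.length (a * t)
            · -- hard case
              obtain ⟨θ₁, hθ₁red, hθ₁⟩ := cs.exists_reduced_word' (a * t * cs.simple j)
              have hθ₁prod : cs.wordProd (θ₁ ++ [j]) = a * t := by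
                rw [cs.wordProd_append, cs.wordProd_singleton, ← hθ₁,
                  cs.simple_mul_simple_cancel_right]
              have hθ₁len : θ₁.length = cs.length (a * t * cs.simple j) := by
                rw [hθ₁, hθ₁red]
              have hatred : cs.IsReduced (θ₁ ++ [j]) := by
                rw [CoxeterSystem.IsReduced, hθ₁prod, List.length_append]
                have h2 : cs.length (a * t * cs.simple j) + 1 = cs.length (a * t) := by
                  rcases cs.length_mul_simple (a * t) j with hc | hc
                  · omega
                  · omega
                simp only [List.length_singleton]
                omega
              have hinvat : cs.length ((a * t) * t) < cs.length (a * t) := by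
                rw [mul_assoc, ht.mul_self, mul_one]
                exact hlt
              obtain ⟨k, hk, hke⟩ := strong_exchange_right cs ht hinvat hθ₁prod
              rw [mul_assoc, ht.mul_self, mul_one] at hke
              -- a = cs.wordProd ((θ₁ ++ [j]).eraseIdx k)
              rw [List.length_append, List.length_singleton] at hk
              by_cases hkend : k = θ₁.length
              · -- erased the last letter j : a = π θ₁ = a * t * s j
                have h1 : (θ₁ ++ [j]).eraseIdx k = θ₁ := by
                  rw [List.eraseIdx_eq_take_drop_succ, hkend, List.take_left]
                  rw [List.drop_eq_nil_of_le (by rw [List.length_append]; simp)]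
                  simp
                rw [h1, ← hθ₁] at hke
                -- hke : a = a * t * cs.simple j
                have h2 : a * cs.simple j = a * t := by
                  conv_lhs => rw [hke, cs.simple_mul_simple_cancel_right]
                rw [h2]
                refine bruhatLE_trans cs hrest ?_
                exact le_mul_refl cs (cs.isReflection_simple j) hup
              · have hklt : k < θ₁.length := by omega
                have h1 : (θ₁ ++ [j]).eraseIdx k = θ₁.eraseIdx k ++ [j] :=
                  List.eraseIdx_append_of_lt_length hklt _
                rw [h1, cs.wordProd_append, cs.wordProd_singleton] at hke
                have h2 : a * cs.simple j = cs.wordProd (θ₁.eraseIdx k) := by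
                  rw [hke, cs.simple_mul_simple_cancel_right]
                have hatle : cs.length (a * t) ≤ cs.length (cs.wordProd ω₀) :=
                  length_le_of_bruhatLE cs hrest
                have hθ₁lt : θ₁.length < n := by
                  have h3 : cs.length (cs.wordProd ω₀) = ω₀.length := hred₀
                  omega
                have h4 : BruhatLE cs (cs.wordProd (θ₁.eraseIdx k)) (cs.wordProd θ₁) :=
                  IH θ₁.length hθ₁lt θ₁ rfl hθ₁red _ (List.eraseIdx_sublist ..)
                rw [h2]
                refine bruhatLE_trans cs h4 ?_
                rw [← hθ₁]
                refine bruhatLE_trans cs (mul_refl_le cs (cs.isReflection_simple j) hv) ?_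
                refine bruhatLE_trans cs hrest ?_
                exact le_mul_refl cs (cs.isReflection_simple j) hup
            · -- easy case : one Bruhat step from a * s j to a * t * s j
              have hv' : cs.length (a * t) < cs.length (a * t * cs.simple j) := by
                rcases Nat.lt_or_gt_of_ne (cs.length_mul_simple_ne (a * t) j) with hc | hc
                · exact absurd hc hv
                · exact hc
              have hreflconj : cs.IsReflection (cs.simple j * t * cs.simple j) := by
                have := ht.conj (cs.simple j)
                rwa [cs.inv_simple] at this
              have hcanc : a * cs.simple j * (cs.simple j * t * cs.simple j)
                  = a * t * cs.simple j := by
                have h9 : a * cs.simple j * (cs.simple j * t * cs.simple j)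
                    = a * (cs.simple j * (cs.simple j * (t * cs.simple j))) := by group
                rw [h9, cs.simple_mul_simple_cancel_left, ← mul_assoc]
              have e1 : cs.length (a * cs.simple j) = cs.length a + 1 := by
                rcases cs.length_mul_simple a j with hc | hc
                · exact hc
                · omega
              have e2 : cs.length (a * t * cs.simple j) = cs.length (a * t) + 1 := by
                rcases cs.length_mul_simple (a * t) j with hc | hc
                · exact hc
                · omega
              have hstep1 : BruhatStep cs (a * cs.simple j) (a * t * cs.simple j) := by
                refine ⟨cs.simple j * t * cs.simple j, hreflconj, hcanc.symm, ?_⟩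
                omega
              exact bruhatLE_trans cs (Relation.ReflTransGen.single hstep1) ih2
      -- now use `key` on the sublist decomposition
      rw [List.sublist_append_iff] at hsub
      obtain ⟨τ₁, τ₂, rfl, hsub₁, hsub₂⟩ := hsub
      rcases List.sublist_singleton.mp hsub₂ with rfl | rfl
      · rw [List.append_nil]
        refine bruhatLE_trans cs ?_ hstepw
        exact IH ω₀.length hlen₀ ω₀ rfl hred₀ τ₁ hsub₁
      · have h1 : BruhatLE cs (cs.wordProd τ₁) (cs.wordProd ω₀) :=
          IH ω₀.length hlen₀ ω₀ rfl hred₀ τ₁ hsub₁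
        have h2 := key (cs.wordProd τ₁) h1
        rw [cs.wordProd_append, cs.wordProd_singleton, hprodw]
        exact h2

lemma le_of_sublist {ω τ : List B} (hred : cs.IsReduced ω) (hsub : τ.Sublist ω) :
    BruhatLE cs (cs.wordProd τ) (cs.wordProd ω) :=
  le_of_sublist_aux cs ω.length ω rfl hred τ hsub


/-! ### Lifting property -/

lemma reduced_cons_of_descent {w : W} {i : B}
    (hw : cs.length (cs.simple i * w) < cs.length w) :
    ∀ ω₁ : List B, cs.IsReduced ω₁ → cs.wordProd ω₁ = cs.simple i * w →
      cs.IsReduced (i :: ω₁) ∧ cs.wordProd (i :: ω₁) = w := by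
  intro ω₁ hred₁ hprod₁
  have hprod : cs.wordProd (i :: ω₁) = w := by
    rw [cs.wordProd_cons, hprod₁, cs.simple_mul_simple_cancel_left]
  have hlw : cs.length (cs.simple i * w) + 1 = cs.length w := by
    rcases cs.length_simple_mul w i with hc | hc
    · omega
    · omega
  refine ⟨?_, hprod⟩
  rw [CoxeterSystem.IsReduced, hprod, List.length_cons]
  have h1 : cs.length (cs.wordProd ω₁) = ω₁.length := hred₁
  rw [hprod₁] at h1
  omega

lemma lift_L2 {u w : W} {i : B} (hu : BruhatLE cs u w)
    (hw : cs.length (cs.simple i * w) < cs.length w)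
    (hsu : cs.length u < cs.length (cs.simple i * u)) :
    BruhatLE cs u (cs.simple i * w) := by
  obtain ⟨ω₁, hred₁, hprod₁⟩ := cs.exists_reduced_word' (cs.simple i * w)
  obtain ⟨hred, hprod⟩ := reduced_cons_of_descent cs hw ω₁ hred₁ hprod₁.symm
  obtain ⟨τ, hsub, hredτ, hprodτ⟩ := exists_reduced_subword cs hu _ hred hprod
  have hsub' : τ.Sublist ([i] ++ ω₁) := hsub
  rw [List.sublist_append_iff] at hsub'
  obtain ⟨τa, τb, rfl, hsuba, hsubb⟩ := hsub'
  rcases List.sublist_singleton.mp hsuba with rfl | rfl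
  · rw [← hprodτ, hprod₁]
    exact le_of_sublist cs hred₁ hsubb
  · exfalso
    have h1 : cs.wordProd ([i] ++ τb) = cs.simple i * cs.wordProd τb := by
      rw [cs.wordProd_append, cs.wordProd_singleton]
    have h2 : cs.simple i * u = cs.wordProd τb := by
      rw [← hprodτ, h1, cs.simple_mul_simple_cancel_left]
    have h3 : cs.length u = τb.length + 1 := by
      have := hredτ
      rw [CoxeterSystem.IsReduced, hprodτ] at this
      simpa using this
    have h4 : cs.length (cs.simple i * u) ≤ τb.length := by
      rw [h2]
      exact cs.length_wordProd_le τb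
    omega

lemma lift_L1 {u w : W} {i : B} (hu : BruhatLE cs u w)
    (hw : cs.length (cs.simple i * w) < cs.length w)
    (hsu : cs.length (cs.simple i * u) < cs.length u) :
    BruhatLE cs (cs.simple i * u) (cs.simple i * w) := by
  obtain ⟨ω₁, hred₁, hprod₁⟩ := cs.exists_reduced_word' (cs.simple i * w)
  obtain ⟨hred, hprod⟩ := reduced_cons_of_descent cs hw ω₁ hred₁ hprod₁.symm
  obtain ⟨τ, hsub, hredτ, hprodτ⟩ := exists_reduced_subword cs hu _ hred hprod
  have hsub' : τ.Sublist ([i] ++ ω₁) := hsub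
  rw [List.sublist_append_iff] at hsub'
  obtain ⟨τa, τb, rfl, hsuba, hsubb⟩ := hsub'
  rcases List.sublist_singleton.mp hsuba with rfl | rfl
  · have h1 : BruhatLE cs u (cs.simple i * w) := by
      rw [← hprodτ, hprod₁]
      exact le_of_sublist cs hred₁ hsubb
    exact bruhatLE_trans cs (simple_mul_le cs hsu) h1
  · have h1 : cs.wordProd ([i] ++ τb) = cs.simple i * cs.wordProd τb := by
      rw [cs.wordProd_append, cs.wordProd_singleton]
    have h2 : cs.simple i * u = cs.wordProd τb := by
      rw [← hprodτ, h1, cs.simple_mul_simple_cancel_left]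
    rw [h2, hprod₁]
    exact le_of_sublist cs hred₁ hsubb

/-! ### Words for elements of parabolic subgroups -/

lemma wordProd_mem_parabolic {J : Set B} {ω : List B} (h : ∀ l ∈ ω, l ∈ J) :
    cs.wordProd ω ∈ parabolic cs J := by
  induction ω with
  | nil =>
    rw [cs.wordProd_nil]
    exact Subgroup.one_mem _
  | cons a ω ih =>
    rw [cs.wordProd_cons]
    refine mul_mem ?_ (ih fun l hl => h l (List.mem_cons_of_mem _ hl))
    exact Subgroup.subset_closure ⟨a, h a (List.mem_cons_self), rfl⟩

lemma exists_word_of_mem_parabolic {J : Set B} {b : W} (hb : b ∈ parabolic cs J) :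
    ∃ ω : List B, (∀ l ∈ ω, l ∈ J) ∧ cs.wordProd ω = b := by
  let K : Subgroup W :=
    { carrier := {b | ∃ ω : List B, (∀ l ∈ ω, l ∈ J) ∧ cs.wordProd ω = b}
      one_mem' := ⟨[], by simp, cs.wordProd_nil⟩
      mul_mem' := by
        rintro x y ⟨ω₁, hω₁, rfl⟩ ⟨ω₂, hω₂, rfl⟩
        exact ⟨ω₁ ++ ω₂, by
          intro l hl
          rcases List.mem_append.mp hl with h | h
          · exact hω₁ l h
          · exact hω₂ l h, cs.wordProd_append ω₁ ω₂⟩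
      inv_mem' := by
        rintro x ⟨ω, hω, rfl⟩
        exact ⟨ω.reverse, fun l hl => hω l (List.mem_reverse.mp hl), cs.wordProd_reverse ω⟩ }
  have hle : parabolic cs J ≤ K := by
    apply (Subgroup.closure_le K).mpr
    rintro _ ⟨j, hj, rfl⟩
    exact ⟨[j], by simpa using hj, cs.wordProd_singleton j⟩
  exact hle hb

lemma exists_reduced_word_of_mem_parabolic {J : Set B} {b : W} (hb : b ∈ parabolic cs J) :
    ∃ ω : List B, (∀ l ∈ ω, l ∈ J) ∧ cs.IsReduced ω ∧ cs.wordProd ω = b := by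
  obtain ⟨ω, hωJ, hωprod⟩ := exists_word_of_mem_parabolic cs hb
  obtain ⟨τ, hsub, hred, hprod⟩ := deletion cs ω
  exact ⟨τ, fun l hl => hωJ l (hsub.subset hl), hred, by rw [hprod, hωprod]⟩


/-! ### Minimal coset representatives -/

lemma isMinRep_mul_length_aux {J : Set B} : ∀ n : ℕ, ∀ b ∈ parabolic cs J, cs.length b = n →
    ∀ z m : W, IsMinRep cs J z m → cs.length (m * b) = cs.length m + cs.length b := by
  intro n
  induction n using Nat.strong_induction_on with
  | _ n IH =>
    intro b hb hbn z m hm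
    obtain ⟨ω, hωJ, hωred, hωprod⟩ := exists_reduced_word_of_mem_parabolic cs hb
    rcases List.eq_nil_or_concat' ω with rfl | ⟨ω₀, j, rfl⟩
    · rw [cs.wordProd_nil] at hωprod
      rw [← hωprod]
      simp
    · have hjJ : j ∈ J := hωJ j (by simp)
      have hω₀J : ∀ l ∈ ω₀, l ∈ J := fun l hl => hωJ l (by simp [hl])
      have hred₀ : cs.IsReduced ω₀ := by
        have := hωred.take ω₀.length
        rwa [List.take_left] at this
      have hb' : cs.wordProd ω₀ ∈ parabolic cs J := wordProd_mem_parabolic cs hω₀J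
      have hlb : cs.length b = ω₀.length + 1 := by
        rw [← hωprod, hωred]
        simp
      have hlb' : cs.length (cs.wordProd ω₀) = ω₀.length := hred₀
      have hbeq : b = cs.wordProd ω₀ * cs.simple j := by
        rw [← hωprod, cs.wordProd_append, cs.wordProd_singleton]
      have IH' : cs.length (m * cs.wordProd ω₀)
          = cs.length m + cs.length (cs.wordProd ω₀) :=
        IH ω₀.length (by omega) _ hb' hlb' z m hm
      rcases cs.length_mul_simple (m * cs.wordProd ω₀) j with hc | hc
      · have h9 : m * b = m * cs.wordProd ω₀ * cs.simple j := by rw [hbeq, mul_assoc]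
        rw [h9, hc, IH']
        omega
      · exfalso
        obtain ⟨ωm, hredm, hprodm⟩ := cs.exists_reduced_word' m
        have hprodmb : cs.wordProd (ωm ++ ω₀) = m * cs.wordProd ω₀ := by
          rw [cs.wordProd_append, ← hprodm]
        have hlt : cs.length ((m * cs.wordProd ω₀) * cs.simple j)
            < cs.length (m * cs.wordProd ω₀) := by omega
        obtain ⟨l₁, l₂, c, hsplit, hprod'⟩ :=
          strong_exchange_right' cs (cs.isReflection_simple j) hlt hprodmb
        have hlenm : cs.length m = ωm.length := by rw [hprodm]; exact hredm
        rcases List.append_eq_append_iff.mp hsplit with ⟨a', ha1, ha2⟩ | ⟨c', hc1, hc2⟩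
        · -- erased inside ω₀
          have h2 : cs.wordProd (l₁ ++ l₂) = m * cs.wordProd (a' ++ l₂) := by
            rw [ha1, List.append_assoc, cs.wordProd_append ωm (a' ++ l₂), ← hprodm]
          have h1 : cs.wordProd ω₀ * cs.simple j = cs.wordProd (a' ++ l₂) :=
            mul_left_cancel (a := m) (by rw [← mul_assoc, hprod', h2])
          have h3 : cs.length (cs.wordProd ω₀ * cs.simple j) ≤ a'.length + l₂.length := by
            rw [h1]
            have := cs.length_wordProd_le (a' ++ l₂)
            rwa [List.length_append] at this
          have h4 : ω₀.length = a'.length + l₂.length + 1 := by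
            rw [ha2, List.length_append, List.length_cons]
            omega
          rw [← hbeq] at h3
          omega
        · rcases c' with _ | ⟨c₀, d⟩
          · -- c' = [] : same as erasing the head of ω₀
            rw [List.nil_append] at hc2
            rw [List.append_nil] at hc1
            have h2 : cs.wordProd (l₁ ++ l₂) = m * cs.wordProd l₂ := by
              rw [← hc1, cs.wordProd_append, ← hprodm]
            have h1 : cs.wordProd ω₀ * cs.simple j = cs.wordProd l₂ :=
              mul_left_cancel (a := m) (by rw [← mul_assoc, hprod', h2])
            have h3 : cs.length (cs.wordProd ω₀ * cs.simple j) ≤ l₂.length :=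
              h1 ▸ cs.length_wordProd_le l₂
            have h4 : ω₀.length = l₂.length + 1 := by rw [← hc2]; simp
            rw [← hbeq] at h3
            omega
          · -- erased inside ωm : contradicts minimality of m
            have hc : c = c₀ ∧ l₂ = d ++ ω₀ := by
              have := hc2
              rw [List.cons_append] at this
              exact ⟨(List.cons.injEq .. ▸ this).1, (List.cons.injEq .. ▸ this).2⟩
            obtain ⟨rfl, rfl⟩ := hc
            have h1 : m * (cs.wordProd ω₀ * cs.simple j * (cs.wordProd ω₀)⁻¹)
                = cs.wordProd (l₁ ++ d) := by
              have h2 : cs.wordProd (l₁ ++ (d ++ ω₀))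
                  = cs.wordProd (l₁ ++ d) * cs.wordProd ω₀ := by
                rw [← List.append_assoc, cs.wordProd_append]
              have h3 := hprod'
              rw [h2] at h3
              have : m * (cs.wordProd ω₀ * cs.simple j)
                  = cs.wordProd (l₁ ++ d) * cs.wordProd ω₀ := by
                rw [← mul_assoc]; exact h3
              rw [← mul_assoc, ← mul_assoc]
              rw [mul_inv_eq_iff_eq_mul]
              rw [mul_assoc]
              exact this
            have hmem1 : z⁻¹ * cs.wordProd (l₁ ++ d) ∈ parabolic cs J := by
              rw [← h1, ← mul_assoc]
              refine mul_mem hm.1 ?_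
              refine mul_mem (mul_mem hb' ?_) (inv_mem hb')
              exact Subgroup.subset_closure ⟨j, hjJ, rfl⟩
            have hmin := hm.2 _ hmem1
            have hlen1 : cs.length (cs.wordProd (l₁ ++ d)) ≤ l₁.length + d.length := by
              have := cs.length_wordProd_le (l₁ ++ d)
              rwa [List.length_append] at this
            have hlen2 : ωm.length = l₁.length + d.length + 1 := by
              rw [hc1, List.length_append, List.length_cons]
              omega
            omega

lemma isMinRep_mul_length {J : Set B} {z m : W} (hm : IsMinRep cs J z m) {b : W}
    (hb : b ∈ parabolic cs J) :
    cs.length (m * b) = cs.length m + cs.length b :=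
  isMinRep_mul_length_aux cs (cs.length b) b hb rfl z m hm

lemma isMinRep_unique {J : Set B} {z z' m m' : W} (hm : IsMinRep cs J z m)
    (hm' : IsMinRep cs J z' m') (hzz : z⁻¹ * z' ∈ parabolic cs J) : m = m' := by
  have h1 : z⁻¹ * m' ∈ parabolic cs J := by
    have he : z⁻¹ * m' = (z⁻¹ * z') * (z'⁻¹ * m') := by group
    rw [he]
    exact mul_mem hzz hm'.1
  have h2 : z'⁻¹ * m ∈ parabolic cs J := by
    have he : z'⁻¹ * m = (z⁻¹ * z')⁻¹ * (z⁻¹ * m) := by group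
    rw [he]
    exact mul_mem (inv_mem hzz) hm.1
  have hle : cs.length m ≤ cs.length m' := hm.2 m' h1
  have hle' : cs.length m' ≤ cs.length m := hm'.2 m h2
  have hb : m⁻¹ * m' ∈ parabolic cs J := by
    have he : m⁻¹ * m' = (z⁻¹ * m)⁻¹ * (z⁻¹ * m') := by group
    rw [he]
    exact mul_mem (inv_mem hm.1) h1
  have hadd := isMinRep_mul_length cs hm hb
  have he : m * (m⁻¹ * m') = m' := by group
  rw [he] at hadd
  have h0 : cs.length (m⁻¹ * m') = 0 := by omega
  have h00 : m⁻¹ * m' = 1 := cs.length_eq_zero_iff.mp h0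
  have := inv_mul_eq_one.mp h00
  exact this

lemma isMinRep_simple_mul_of_lt {J : Set B} {z m : W} (hm : IsMinRep cs J z m) {i : B}
    (h : cs.length (cs.simple i * m) < cs.length m) :
    IsMinRep cs J (cs.simple i * z) (cs.simple i * m) := by
  constructor
  · have he : (cs.simple i * z)⁻¹ * (cs.simple i * m) = z⁻¹ * m := by group
    rw [he]
    exact hm.1
  · intro y hy
    have heq : (cs.simple i * z)⁻¹ * y = z⁻¹ * (cs.simple i * y) := by
      rw [mul_inv_rev, cs.inv_simple]
      group
    rw [heq] at hy
    have hbmem : m⁻¹ * (cs.simple i * y) ∈ parabolic cs J := by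
      have he : m⁻¹ * (cs.simple i * y) = (z⁻¹ * m)⁻¹ * (z⁻¹ * (cs.simple i * y)) := by group
      rw [he]
      exact mul_mem (inv_mem hm.1) hy
    have hadd := isMinRep_mul_length cs hm hbmem
    have hmb : m * (m⁻¹ * (cs.simple i * y)) = cs.simple i * y := by group
    rw [hmb] at hadd
    have h2 : cs.length (cs.simple i * m) + 1 = cs.length m := by
      rcases cs.length_simple_mul m i with hc | hc
      · omega
      · omega
    have h3 : cs.length (cs.simple i * y) ≤ cs.length y + 1 := by
      rcases cs.length_simple_mul y i with hc | hc
      · omega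
      · omega
    omega

lemma isMinRep_dichotomy {J : Set B} {z m μ : W} {i : B} (hm : IsMinRep cs J z m)
    (hμ : IsMinRep cs J (cs.simple i * z) μ)
    (h : cs.length m < cs.length (cs.simple i * m)) :
    μ = m ∨ μ = cs.simple i * m := by
  by_cases hA : cs.length (cs.simple i * μ) < cs.length μ
  · right
    have h6 := isMinRep_simple_mul_of_lt cs hμ hA
    rw [cs.simple_mul_simple_cancel_left] at h6
    have h7 : cs.simple i * μ = m :=
      isMinRep_unique cs h6 hm (by rw [inv_mul_cancel]; exact Subgroup.one_mem _)
    rw [← h7, cs.simple_mul_simple_cancel_left]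
  · have hB : cs.length μ < cs.length (cs.simple i * μ) := by
      rcases Nat.lt_or_gt_of_ne (cs.length_simple_mul_ne μ i) with hc | hc
      · exact absurd hc hA
      · exact hc
    have hz : z⁻¹ * (cs.simple i * μ) ∈ parabolic cs J := by
      have heq : z⁻¹ * (cs.simple i * μ) = (cs.simple i * z)⁻¹ * μ := by
        rw [mul_inv_rev, cs.inv_simple]
        group
      rw [heq]
      exact hμ.1
    have hbmem : m⁻¹ * (cs.simple i * μ) ∈ parabolic cs J := by
      have he : m⁻¹ * (cs.simple i * μ) = (z⁻¹ * m)⁻¹ * (z⁻¹ * (cs.simple i * μ)) := by group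
      rw [he]
      exact mul_mem (inv_mem hm.1) hz
    have hmb : m * (m⁻¹ * (cs.simple i * μ)) = cs.simple i * μ := by group
    have hadd := isMinRep_mul_length cs hm hbmem
    rw [hmb] at hadd
    have hBe : cs.length (cs.simple i * μ) = cs.length μ + 1 := by
      rcases cs.length_simple_mul μ i with hc | hc
      · omega
      · omega
    obtain ⟨ωb, hωbJ, hωbred, hωbprod⟩ :=
      exists_reduced_word_of_mem_parabolic cs hbmem
    obtain ⟨ωm, hredm, hprodm⟩ := cs.exists_reduced_word' m
    have hprodmb : cs.wordProd (ωm ++ ωb) = m * (m⁻¹ * (cs.simple i * μ)) := by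
      rw [cs.wordProd_append, ← hprodm, hωbprod]
    have hltl : cs.length (cs.simple i * (m * (m⁻¹ * (cs.simple i * μ))))
        < cs.length (m * (m⁻¹ * (cs.simple i * μ))) := by
      rw [hmb, cs.simple_mul_simple_cancel_left]
      omega
    obtain ⟨l₁, l₂, c, hsplit, hprod'⟩ :=
      strong_exchange_left cs (cs.isReflection_simple i) hltl hprodmb
    have hμeq : cs.simple i * (m * (m⁻¹ * (cs.simple i * μ))) = μ := by
      rw [hmb, cs.simple_mul_simple_cancel_left]
    rw [hμeq] at hprod'
    have hlenm : cs.length m = ωm.length := by rw [hprodm]; exact hredm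
    -- in the first two cases, μ lies in the coset z W_J
    have finish1 : m⁻¹ * μ ∈ parabolic cs J → μ = m := by
      intro hμm
      have hzμ : z⁻¹ * μ ∈ parabolic cs J := by
        have he : z⁻¹ * μ = (z⁻¹ * m) * (m⁻¹ * μ) := by group
        rw [he]
        exact mul_mem hm.1 hμm
      have hμz : IsMinRep cs J z μ := by
        refine ⟨hzμ, ?_⟩
        intro y hy
        apply hμ.2
        have he : (cs.simple i * z)⁻¹ * y
            = ((cs.simple i * z)⁻¹ * μ) * ((z⁻¹ * μ)⁻¹ * (z⁻¹ * y)) := by group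
        rw [he]
        exact mul_mem hμ.1 (mul_mem (inv_mem hzμ) hy)
      exact isMinRep_unique cs hμz hm (by rw [inv_mul_cancel]; exact Subgroup.one_mem _)
    rcases List.append_eq_append_iff.mp hsplit with ⟨a', ha1, ha2⟩ | ⟨c', hc1, hc2⟩
    · -- erased inside ωb
      left
      apply finish1
      have h1 : μ = m * cs.wordProd (a' ++ l₂) := by
        rw [hprod', ha1, List.append_assoc, cs.wordProd_append, ← hprodm]
      have h2 : m⁻¹ * μ = cs.wordProd (a' ++ l₂) := by rw [h1]; group
      rw [h2]
      refine wordProd_mem_parabolic cs ?_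
      intro l hl
      apply hωbJ
      rw [ha2]
      rcases List.mem_append.mp hl with h | h
      · exact List.mem_append.mpr (Or.inl h)
      · exact List.mem_append.mpr (Or.inr (List.mem_cons_of_mem _ h))
    · rcases c' with _ | ⟨c₀, d⟩
      · -- c' = []
        left
        apply finish1
        rw [List.nil_append] at hc2
        rw [List.append_nil] at hc1
        have h1 : μ = m * cs.wordProd l₂ := by
          rw [hprod', ← hc1, cs.wordProd_append, ← hprodm]
        have h2 : m⁻¹ * μ = cs.wordProd l₂ := by rw [h1]; group
        rw [h2]
        refine wordProd_mem_parabolic cs ?_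
        intro l hl
        apply hωbJ
        rw [← hc2]
        exact List.mem_cons_of_mem _ hl
      · -- erased inside ωm : contradiction
        exfalso
        have hcc : c = c₀ ∧ l₂ = d ++ ωb := by
          rw [List.cons_append] at hc2
          exact ⟨(List.cons.injEq .. ▸ hc2).1, (List.cons.injEq .. ▸ hc2).2⟩
        obtain ⟨rfl, rfl⟩ := hcc
        have h1 : μ = cs.wordProd (l₁ ++ d) * (m⁻¹ * (cs.simple i * μ)) := by
          conv_lhs => rw [hprod', ← List.append_assoc, cs.wordProd_append (l₁ ++ d) ωb, hωbprod]
        have h2 : μ * (m⁻¹ * (cs.simple i * μ))⁻¹ = cs.wordProd (l₁ ++ d) := by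
          have h2' := congrArg (fun x => x * (m⁻¹ * (cs.simple i * μ))⁻¹) h1
          rwa [mul_inv_cancel_right] at h2'
        have hmemld : (cs.simple i * z)⁻¹ * cs.wordProd (l₁ ++ d) ∈ parabolic cs J := by
          rw [← h2, ← mul_assoc]
          exact mul_mem hμ.1 (inv_mem hbmem)
        have hminμ := hμ.2 _ hmemld
        have hlen1 : cs.length (cs.wordProd (l₁ ++ d)) ≤ l₁.length + d.length := by
          have := cs.length_wordProd_le (l₁ ++ d)
          rwa [List.length_append] at this
        have hlen2 : ωm.length = l₁.length + d.length + 1 := by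
          rw [hc1, List.length_append, List.length_cons]
          omega
        -- now : ℓ μ ≤ ℓ m - 1, and ℓ (s i μ) = ℓ m + ℓ b = ℓ μ + 1
        have hb0 : cs.length (m⁻¹ * (cs.simple i * μ)) = 0 := by omega
        have hb1 : m⁻¹ * (cs.simple i * μ) = 1 := cs.length_eq_zero_iff.mp hb0
        have hμm : cs.simple i * μ = m := (inv_mul_eq_one.mp hb1).symm
        have hμval : μ = cs.simple i * m := by
          rw [← hμm, cs.simple_mul_simple_cancel_left]
        have hfin : cs.length μ = cs.length (cs.simple i * m) := by rw [hμval]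
        omega


/-- Lemma: if `x^J ≤ y^J` and `sy < y`, then `(x')^J ≤ (sy)^J`
where `x' = min{x, sx}`. -/
theorem minRep_le_of_simple_mul (cs : CoxeterSystem M W) (J : Set B) (i : B)
    (x y x' mx my mx' msy : W)
    (hmx : IsMinRep cs J x mx) (hmy : IsMinRep cs J y my)
    (hxy : BruhatLE cs mx my)
    (hsy : BruhatLT cs (cs.simple i * y) y)
    (hx'def : (x' = x ∨ x' = cs.simple i * x) ∧
      BruhatLE cs x' x ∧ BruhatLE cs x' (cs.simple i * x))
    (hmx' : IsMinRep cs J x' mx') (hmsy : IsMinRep cs J (cs.simple i * y) msy) :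
    BruhatLE cs mx' msy := by
  obtain ⟨hx'or, hx'lex, hx'lesx⟩ := hx'def
  have honemem : ∀ z : W, z⁻¹ * z ∈ parabolic cs J := by
    intro z
    rw [inv_mul_cancel]
    exact Subgroup.one_mem _
  -- the y-side dichotomy
  have hY : (msy = cs.simple i * my ∧ cs.length (cs.simple i * my) < cs.length my)
      ∨ BruhatLE cs my msy := by
    by_cases hcy : cs.length (cs.simple i * my) < cs.length my
    · left
      refine ⟨?_, hcy⟩
      exact isMinRep_unique cs hmsy (isMinRep_simple_mul_of_lt cs hmy hcy) (honemem _)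
    · right
      have hcy' : cs.length my < cs.length (cs.simple i * my) := by
        rcases Nat.lt_or_gt_of_ne (cs.length_simple_mul_ne my i) with hc | hc
        · exact absurd hc hcy
        · exact hc
      rcases isMinRep_dichotomy cs hmy hmsy hcy' with hmsy_eq | hmsy_eq
      · rw [hmsy_eq]
        exact bruhatLE_refl cs my
      · rw [hmsy_eq]
        exact le_simple_mul cs hcy'
  -- a helper for the "mx' = mx" cases
  have hfinish_mx : cs.length mx < cs.length (cs.simple i * mx) → BruhatLE cs mx msy := by
    intro hsmx
    rcases hY with ⟨hmsy_eq, hcy⟩ | hmyle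
    · rw [hmsy_eq]
      exact lift_L2 cs hxy hcy hsmx
    · exact bruhatLE_trans cs hxy hmyle
  rcases hx'or with rfl | rfl
  · -- case x' = x
    have hmx'_eq : mx' = mx := isMinRep_unique cs hmx' hmx (honemem _)
    -- show ℓ mx < ℓ (s i * mx)
    have hxlen : cs.length x' ≤ cs.length (cs.simple i * x') :=
      length_le_of_bruhatLE cs hx'lesx
    have hamem : mx⁻¹ * x' ∈ parabolic cs J := by
      have he : mx⁻¹ * x' = (x'⁻¹ * mx)⁻¹ := by group
      rw [he]
      exact inv_mem hmx.1
    have haddx : cs.length x' = cs.length mx + cs.length (mx⁻¹ * x') := by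
      have := isMinRep_mul_length cs hmx hamem
      rwa [show mx * (mx⁻¹ * x') = x' by group] at this
    have hsmx : cs.length mx < cs.length (cs.simple i * mx) := by
      by_contra hcon
      have hlt : cs.length (cs.simple i * mx) + 1 = cs.length mx := by
        rcases cs.length_simple_mul mx i with hc | hc
        · omega
        · omega
      have hsxe : cs.simple i * x' = (cs.simple i * mx) * (mx⁻¹ * x') := by group
      have hsxle : cs.length (cs.simple i * x')
          ≤ cs.length (cs.simple i * mx) + cs.length (mx⁻¹ * x') := by
        rw [hsxe]
        exact cs.length_mul_le _ _
      omega
    rw [hmx'_eq]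
    exact hfinish_mx hsmx
  · -- case x' = s i * x
    by_cases hcx : cs.length (cs.simple i * mx) < cs.length mx
    · have hmx'_eq : mx' = cs.simple i * mx :=
        isMinRep_unique cs hmx' (isMinRep_simple_mul_of_lt cs hmx hcx) (honemem _)
      rcases hY with ⟨hmsy_eq, hcy⟩ | hmyle
      · rw [hmx'_eq, hmsy_eq]
        exact lift_L1 cs hxy hcy hcx
      · rw [hmx'_eq]
        exact bruhatLE_trans cs (simple_mul_le cs hcx)
          (bruhatLE_trans cs hxy hmyle)
    · have hcx' : cs.length mx < cs.length (cs.simple i * mx) := by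
        rcases Nat.lt_or_gt_of_ne (cs.length_simple_mul_ne mx i) with hc | hc
        · exact absurd hc hcx
        · exact hc
      rcases isMinRep_dichotomy cs hmx hmx' hcx' with hmx'_eq | hmx'_eq
      · rw [hmx'_eq]
        exact hfinish_mx hcx'
      · -- mx' = s i * mx with ℓ (s i * mx) > ℓ mx : contradicts s i * x ≤ x
        exfalso
        have hamem : mx⁻¹ * x ∈ parabolic cs J := by
          have he : mx⁻¹ * x = (x⁻¹ * mx)⁻¹ := by group
          rw [he]
          exact inv_mem hmx.1
        have haddx : cs.length x = cs.length mx + cs.length (mx⁻¹ * x) := by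
          have := isMinRep_mul_length cs hmx hamem
          rwa [show mx * (mx⁻¹ * x) = x by group] at this
        have hamem' : mx'⁻¹ * (cs.simple i * x) ∈ parabolic cs J := by
          rw [hmx'_eq]
          have he : (cs.simple i * mx)⁻¹ * (cs.simple i * x) = mx⁻¹ * x := by group
          rw [he]
          exact hamem
        have haddsx : cs.length (cs.simple i * x)
            = cs.length mx' + cs.length (mx'⁻¹ * (cs.simple i * x)) := by
          have := isMinRep_mul_length cs hmx' hamem'
          rwa [show mx' * (mx'⁻¹ * (cs.simple i * x)) = cs.simple i * x by group] at this
        have hsame : cs.length (mx'⁻¹ * (cs.simple i * x)) = cs.length (mx⁻¹ * x) := by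
          congr 1
          rw [hmx'_eq]
          group
        have hlmx' : cs.length mx' = cs.length mx + 1 := by
          rw [hmx'_eq]
          rcases cs.length_simple_mul mx i with hc | hc
          · omega
          · omega
        have hsxlex : cs.length (cs.simple i * x) ≤ cs.length x :=
          length_le_of_bruhatLE cs hx'lex
        omega

end Paper
end

section
/- Let (W,S) be a Coxeter group, J ⊆ S, and x, y ∈ W. If x^J ≤ y^J in the Bruhat order, then x ≤ yu for some u ∈ W_J. -/
namespace Paper

variable {B : Type*} {W : Type*} [Group W] {M : CoxeterMatrix B}

open CoxeterSystem List

open scoped Classical in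
noncomputable def ind (P : Prop) : ZMod 2 := if P then 1 else 0

lemma ind_pos {P : Prop} (h : P) : ind P = 1 := by classical simp [ind, h]

lemma ind_neg {P : Prop} (h : ¬ P) : ind P = 0 := by classical simp [ind, h]

lemma ind_congr {P Q : Prop} (h : P ↔ Q) : ind P = ind Q := by
  by_cases hp : P
  · rw [ind_pos hp, ind_pos (h.mp hp)]
  · rw [ind_neg hp, ind_neg (fun hq => hp (h.mpr hq))]

lemma ind_add_ind_self (P : Prop) : ind P + ind P = 0 := by
  by_cases hp : P
  · rw [ind_pos hp]; decide
  · rw [ind_neg hp]; decide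

lemma conj_conj (cs : CoxeterSystem M W) (i : B) (w : W) :
    cs.simple i * (cs.simple i * w * cs.simple i) * cs.simple i = w := by
  rw [← mul_assoc, ← mul_assoc, cs.simple_mul_simple_self, one_mul,
    cs.simple_mul_simple_cancel_right]

lemma conj_eq_simple_iff (cs : CoxeterSystem M W) (i : B) (w : W) :
    cs.simple i * w * cs.simple i = cs.simple i ↔ w = cs.simple i := by
  constructor
  · intro h
    have := congrArg (fun x => cs.simple i * x * cs.simple i) h
    rw [conj_conj, cs.simple_mul_simple_self, one_mul] at this
    exact this
  · rintro rfl; rw [cs.simple_mul_simple_self, one_mul]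

noncomputable def refPerm (cs : CoxeterSystem M W) (i : B) : Function.End (W × ZMod 2) :=
  fun p => (cs.simple i * p.1 * cs.simple i, p.2 + ind (p.1 = cs.simple i))

lemma refPerm_mul_apply (cs : CoxeterSystem M W) (i j : B) (w : W) (z : ZMod 2) :
    (refPerm cs i * refPerm cs j) (w, z) =
      ((cs.simple i * cs.simple j) * w * (cs.simple i * cs.simple j)⁻¹,
        z + ind (w = cs.simple j * (cs.simple i * cs.simple j)^0)
          + ind (w = cs.simple j * (cs.simple i * cs.simple j)^1)) := by
  show refPerm cs i (refPerm cs j (w, z)) = _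
  simp only [refPerm]
  refine Prod.ext ?_ ?_
  · show cs.simple i * (cs.simple j * w * cs.simple j) * cs.simple i = _
    rw [mul_inv_rev, cs.inv_simple, cs.inv_simple]
    group
  · show z + ind (w = cs.simple j) + ind (cs.simple j * w * cs.simple j = cs.simple i) = _
    rw [pow_zero, mul_one, pow_one]
    have : ind (cs.simple j * w * cs.simple j = cs.simple i)
        = ind (w = cs.simple j * (cs.simple i * cs.simple j)) := by
      apply ind_congr
      constructor
      · intro h
        have := congrArg (fun x => cs.simple j * x * cs.simple j) h
        rw [← mul_assoc, ← mul_assoc, cs.simple_mul_simple_self, one_mul,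
          cs.simple_mul_simple_cancel_right] at this
        rw [this]; group
      · rintro rfl
        rw [cs.simple_mul_simple_cancel_left, mul_assoc, cs.simple_mul_simple_self, mul_one]
    rw [this]

lemma inv_p_mul (cs : CoxeterSystem M W) (i j : B) :
    (cs.simple i * cs.simple j)⁻¹ * cs.simple j = cs.simple j * (cs.simple i * cs.simple j) := by
  rw [mul_inv_rev, cs.inv_simple, cs.inv_simple]
  group

lemma conj_pow_aux {W : Type*} [Group W] (a q : W) (r : ℕ) (h : q⁻¹ * a = a * q) :
    q⁻¹ * (a * q ^ r) * q = a * q ^ (r + 2) := by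
  rw [← mul_assoc, h]; group

lemma refPerm_pow_apply (cs : CoxeterSystem M W) (i j : B) (m : ℕ) (w : W) (z : ZMod 2) :
    ((refPerm cs i * refPerm cs j) ^ m) (w, z) =
      ((cs.simple i * cs.simple j) ^ m * w * ((cs.simple i * cs.simple j) ^ m)⁻¹,
        z + ∑ r ∈ Finset.range (2 * m), ind (w = cs.simple j * (cs.simple i * cs.simple j) ^ r)) := by
  induction m generalizing w z with
  | zero => simp; rfl
  | succ m ih =>
    rw [pow_succ]
    show ((refPerm cs i * refPerm cs j) ^ m) ((refPerm cs i * refPerm cs j) (w, z)) = _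
    rw [refPerm_mul_apply, ih]
    have hip : ∀ r : ℕ, (cs.simple i * cs.simple j)⁻¹ * (cs.simple j * (cs.simple i * cs.simple j) ^ r) * (cs.simple i * cs.simple j) = cs.simple j * (cs.simple i * cs.simple j) ^ (r + 2) :=
      fun r => conj_pow_aux (cs.simple j) (cs.simple i * cs.simple j) r (inv_p_mul cs i j)
    set p := cs.simple i * cs.simple j with hp
    refine Prod.ext ?_ ?_
    · show p ^ m * (p * w * p⁻¹) * (p ^ m)⁻¹ = _
      group
    · show _ + ∑ r ∈ Finset.range (2 * m), ind (p * w * p⁻¹ = cs.simple j * p ^ r) = _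
      have key : ∀ r : ℕ, ind (p * w * p⁻¹ = cs.simple j * p ^ r) = ind (w = cs.simple j * p ^ (r + 2)) := by
        intro r
        apply ind_congr
        rw [mul_inv_eq_iff_eq_mul, ← eq_inv_mul_iff_mul_eq, ← mul_assoc, hip r]
      simp only [key]
      rw [show (2 * (m + 1)) = (2 * m) + 1 + 1 from by ring, Finset.sum_range_succ',
        Finset.sum_range_succ']
      simp only [show ∀ r : ℕ, r + 1 + 1 = r + 2 from fun r => rfl, Nat.zero_add]
      abel
  

section
open scoped Classical
variable (cs : CoxeterSystem M W)
local prefix:100 "π" => CoxeterSystem.wordProd cs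
local prefix:100 "ris" => CoxeterSystem.rightInvSeq cs

lemma refPerm_liftable : M.IsLiftable (refPerm cs) := by
  intro i j
  rcases Nat.eq_zero_or_pos (M i j) with h | h
  · rw [h, pow_zero]
  · funext x
    obtain ⟨w, z⟩ := x
    rw [refPerm_pow_apply]
    show _ = (w, z)
    rw [cs.simple_mul_simple_pow i j]
    refine Prod.ext (by simp) ?_
    show z + ∑ r ∈ Finset.range (2 * M i j), ind (w = cs.simple j * (cs.simple i * cs.simple j) ^ r) = z
    rw [two_mul, Finset.sum_range_add]
    have : ∀ r : ℕ, ind (w = cs.simple j * (cs.simple i * cs.simple j) ^ (M i j + r))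
        = ind (w = cs.simple j * (cs.simple i * cs.simple j) ^ r) := by
      intro r
      apply ind_congr
      rw [pow_add, cs.simple_mul_simple_pow i j, one_mul]
    simp only [this]
    rw [← Finset.sum_add_distrib]
    simp only [ind_add_ind_self, Finset.sum_const_zero, add_zero]

/-- The permutation representation of `W` on `W × ZMod 2`. -/
noncomputable def rho : W →* Function.End (W × ZMod 2) :=
  cs.lift ⟨refPerm cs, refPerm_liftable cs⟩

lemma rho_simple (i : B) : rho cs (cs.simple i) = refPerm cs i :=
  cs.lift_apply_simple (refPerm_liftable cs) i

lemma rho_wordProd (ω : List B) (t : W) (z : ZMod 2) :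
    rho cs (π ω) (t, z) = ((π ω) * t * (π ω)⁻¹, z + ((ris ω).count t : ZMod 2)) := by
  induction ω generalizing z with
  | nil => simp [CoxeterSystem.rightInvSeq]; rfl
  | cons i ω ih =>
    rw [cs.wordProd_cons, map_mul, rho_simple]
    show refPerm cs i (rho cs (π ω) (t, z)) = _
    rw [ih]
    simp only [refPerm, CoxeterSystem.rightInvSeq]
    refine Prod.ext ?_ ?_
    · show cs.simple i * (π ω * t * (π ω)⁻¹) * cs.simple i = _
      rw [mul_inv_rev, cs.inv_simple]
      group
    · show z + ((ris ω).count t : ZMod 2) + ind (π ω * t * (π ω)⁻¹ = cs.simple i) = _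
      rw [List.count_cons]
      have : ind (π ω * t * (π ω)⁻¹ = cs.simple i) = ind (t = (π ω)⁻¹ * cs.simple i * π ω) := by
        apply ind_congr
        constructor
        · intro h
          rw [← h]; group
        · intro h
          rw [h]; group
      rw [this]
      by_cases ht : t = (π ω)⁻¹ * cs.simple i * π ω
      · rw [ind_pos ht, if_pos (by rw [ht]; exact beq_self_eq_true _)]
        push_cast; ring
      · rw [ind_neg ht, if_neg (by simp only [beq_iff_eq]; exact fun hc => ht hc.symm)]
        push_cast; ring
/-- Parity cocycle. -/
noncomputable def nn (w t : W) : ZMod 2 := ((rho cs) w (t, 0)).2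

lemma rho_spec (w t : W) (z : ZMod 2) :
    rho cs w (t, z) = (w * t * w⁻¹, z + nn cs w t) := by
  obtain ⟨ω, rfl⟩ := cs.wordProd_surjective w
  rw [rho_wordProd, nn, rho_wordProd, zero_add]

lemma nn_cocycle (a b t : W) :
    nn cs (a * b) t = nn cs b t + nn cs a (b * t * b⁻¹) := by
  have h1 : rho cs (a * b) (t, 0) = rho cs a (rho cs b (t, 0)) := by
    rw [map_mul]; rfl
  rw [nn, h1, rho_spec, rho_spec, zero_add]

lemma nn_simple (i : B) (u : W) : nn cs (cs.simple i) u = ind (u = cs.simple i) := by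
  rw [nn, rho_simple]
  show (refPerm cs i (u, 0)).2 = _
  simp [refPerm]

lemma nn_conj_step (x : W) (j : B) :
    nn cs (cs.simple j * x * cs.simple j) (cs.simple j * x * cs.simple j) = nn cs x x := by
  have assoc1 : cs.simple j * x * cs.simple j = cs.simple j * (x * cs.simple j) := by group
  rw [assoc1, nn_cocycle, nn_cocycle]
  have e2 : x * cs.simple j * (cs.simple j * (x * cs.simple j)) * (x * cs.simple j)⁻¹ = x := by
    calc x * cs.simple j * (cs.simple j * (x * cs.simple j)) * (x * cs.simple j)⁻¹
        = x * (cs.simple j * cs.simple j) * x * (cs.simple j * (cs.simple j)⁻¹) * x⁻¹ := by group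
      _ = x * 1 * x * (cs.simple j * (cs.simple j)⁻¹) * x⁻¹ := by rw [cs.simple_mul_simple_self]
      _ = x := by group
  have e4 : cs.simple j * (cs.simple j * (x * cs.simple j)) * (cs.simple j)⁻¹ = x := by
    calc cs.simple j * (cs.simple j * (x * cs.simple j)) * (cs.simple j)⁻¹
        = (cs.simple j * cs.simple j) * x * (cs.simple j * (cs.simple j)⁻¹) := by group
      _ = 1 * x * (cs.simple j * (cs.simple j)⁻¹) := by rw [cs.simple_mul_simple_self]
      _ = x := by group
  rw [e2, e4, nn_simple, nn_simple]
  have e5 : ind (cs.simple j * (x * cs.simple j) = cs.simple j) = ind (x = cs.simple j) := by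
    apply ind_congr
    rw [← mul_assoc]
    exact conj_eq_simple_iff cs j x
  rw [e5]
  rw [show ind (x = cs.simple j) + nn cs x x + ind (x = cs.simple j)
    = nn cs x x + (ind (x = cs.simple j) + ind (x = cs.simple j)) from by ring,
    ind_add_ind_self, add_zero]

lemma nn_conj_self (v : W) (i : B) :
    nn cs (v * cs.simple i * v⁻¹) (v * cs.simple i * v⁻¹) = 1 := by
  obtain ⟨α, rfl⟩ := cs.wordProd_surjective v
  induction α with
  | nil => simp [nn_simple, ind_pos]
  | cons j α ih =>
    rw [cs.wordProd_cons]
    have hT : cs.simple j * π α * cs.simple i * (cs.simple j * π α)⁻¹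
        = cs.simple j * (π α * cs.simple i * (π α)⁻¹) * cs.simple j := by
      rw [mul_inv_rev, cs.inv_simple]; group
    rw [hT, nn_conj_step]
    exact ih

lemma nn_refl_self {t : W} (h : cs.IsReflection t) : nn cs t t = 1 := by
  obtain ⟨v, i, rfl⟩ := h
  exact nn_conj_self cs v i

lemma nn_eq_count (ω : List B) (t : W) : nn cs (π ω) t = ((ris ω).count t : ZMod 2) := by
  rw [nn, rho_wordProd, zero_add]

lemma mem_ris_iff_nn {ω : List B} (hred : cs.IsReduced ω) (t : W) :
    t ∈ ris ω ↔ nn cs (π ω) t = 1 := by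
  rw [nn_eq_count]
  by_cases hm : t ∈ ris ω
  · rw [List.count_eq_one_of_mem (hred.nodup_rightInvSeq) hm]
    simp [hm]
  · rw [List.count_eq_zero_of_not_mem hm]
    simp only [hm, false_iff, Nat.cast_zero]
    exact fun hc => one_ne_zero hc.symm

lemma nn_mul_refl (w : W) {t : W} (h : cs.IsReflection t) :
    nn cs (w * t) t = nn cs w t + 1 := by
  rw [nn_cocycle]
  have : t * t * t⁻¹ = t := by rw [h.mul_self, one_mul, h.inv]
  rw [this, nn_refl_self cs h]
  ring

lemma nn_eq_one_of_inversion {w t : W} (h : cs.IsReflection t)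
    (hlt : cs.length (w * t) < cs.length w) : nn cs w t = 1 := by
  by_contra hne
  have h0 : nn cs w t = 0 := by
    have : ∀ x : ZMod 2, x = 0 ∨ x = 1 := by decide
    rcases this (nn cs w t) with h | h
    · exact h
    · exact absurd h hne
  have h1 : nn cs (w * t) t = 1 := by rw [nn_mul_refl cs w h, h0, zero_add]
  obtain ⟨γ, hγred, hγ⟩ := cs.exists_reduced_word' (w * t)
  have hmem : t ∈ ris γ := (mem_ris_iff_nn cs hγred t).mpr (by rw [← hγ]; exact h1)
  have hinv := cs.isRightInversion_of_mem_rightInvSeq hγred hmem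
  rw [← hγ] at hinv
  have hww : w * t * t = w := by rw [mul_assoc, h.mul_self, mul_one]
  have h2 := hinv.2
  rw [hww] at h2
  omega

lemma mem_ris_of_inversion {ω : List B} (hred : cs.IsReduced ω) {t : W}
    (h : cs.IsReflection t) (hlt : cs.length (π ω * t) < cs.length (π ω)) : t ∈ ris ω :=
  (mem_ris_iff_nn cs hred t).mpr (nn_eq_one_of_inversion cs h hlt)

/-- Strong exchange. -/
lemma strong_exchange {ω : List B} (hred : cs.IsReduced ω) {t : W}
    (h : cs.IsReflection t) (hlt : cs.length (π ω * t) < cs.length (π ω)) :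
    ∃ j < ω.length, π (ω.eraseIdx j) = π ω * t := by
  have hmem := mem_ris_of_inversion cs hred h hlt
  obtain ⟨j, hj, hget⟩ := List.getElem_of_mem hmem
  refine ⟨j, by simpa using hj, ?_⟩
  rw [← cs.wordProd_mul_getD_rightInvSeq ω j, List.getD_eq_getElem _ _ hj, hget]

/-- Any word contains a reduced sublist with the same product. -/
lemma exists_reduced_sublist (n : ℕ) : ∀ ω : List B, ω.length ≤ n →
    ∃ δ, δ <+ ω ∧ cs.IsReduced δ ∧ π δ = π ω := by
  induction n with
  | zero =>
    intro ω hlen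
    have hω : ω = [] := List.length_eq_zero_iff.mp (Nat.le_zero.mp hlen)
    subst hω
    exact ⟨[], List.Sublist.refl _, by simp [CoxeterSystem.IsReduced], rfl⟩
  | succ n IHn =>
    intro ω hlen
    by_cases hred : cs.IsReduced ω
    · exact ⟨ω, List.Sublist.refl _, hred, rfl⟩
    · have hω : ω ≠ [] := by
        rintro rfl
        exact hred (by simp [CoxeterSystem.IsReduced])
      have hlpos : 1 ≤ ω.length := by
        cases ω with
        | nil => exact absurd rfl hω
        | cons a l => simp
      have hQ : ∃ j, ¬ cs.IsReduced (ω.take (j + 1)) := by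
        refine ⟨ω.length - 1, ?_⟩
        rw [Nat.sub_add_cancel hlpos, List.take_length]
        exact hred
      set j := Nat.find hQ with hjdef
      have hj : ¬ cs.IsReduced (ω.take (j + 1)) := Nat.find_spec hQ
      have hjle : j ≤ ω.length - 1 := Nat.find_le (by
        rw [Nat.sub_add_cancel hlpos, List.take_length]; exact hred)
      have hjlt : j < ω.length := by omega
      have hjr : cs.IsReduced (ω.take j) := by
        rcases Nat.eq_zero_or_pos j with h0 | h0
        · rw [h0]; simp [CoxeterSystem.IsReduced]
        · have hmin := Nat.find_min hQ (m := j - 1) (by omega)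
          rw [not_not] at hmin
          rwa [Nat.sub_add_cancel h0] at hmin
      have htake : ω.take (j + 1) = ω.take j ++ [ω[j]'hjlt] := by
        rw [List.take_succ, List.getElem?_eq_getElem hjlt]
        rfl
      have hlentake : (ω.take j).length = j := by
        rw [List.length_take]; omega
      have hlenred : cs.length (π (ω.take j)) = j := by
        have h := hjr
        unfold CoxeterSystem.IsReduced at h
        rwa [hlentake] at h
      have hmulred : π (ω.take (j + 1)) = π (ω.take j) * cs.simple (ω[j]'hjlt) := by
        rw [htake, cs.wordProd_append, cs.wordProd_singleton]
      have hnotred : cs.length (π (ω.take (j + 1))) ≠ j + 1 := by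
        intro hc
        apply hj
        unfold CoxeterSystem.IsReduced
        rw [hc, List.length_take]
        omega
      have hinv : cs.length (π (ω.take j) * cs.simple (ω[j]'hjlt)) < cs.length (π (ω.take j)) := by
        rcases cs.length_mul_simple (π (ω.take j)) (ω[j]'hjlt) with h | h
        · exfalso; apply hnotred; rw [hmulred, h, hlenred]
        · omega
      obtain ⟨k, hk, hkey⟩ := strong_exchange cs hjr (cs.isReflection_simple _) hinv
      have hkk : k < j := by rwa [hlentake] at hk
      set ω₂ := (ω.take j).eraseIdx k ++ ω.drop (j + 1) with hω₂
      have hprod : π ω₂ = π ω := by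
        conv_rhs => rw [← List.take_append_drop (j + 1) ω]
        rw [hω₂, cs.wordProd_append, cs.wordProd_append, hkey, ← hmulred]
      have hsub : ω₂ <+ ω := by
        conv_rhs => rw [← List.take_append_drop (j + 1) ω]
        apply List.Sublist.append _ (List.Sublist.refl _)
        refine (List.eraseIdx_sublist _ _).trans ?_
        rw [htake]
        exact List.sublist_append_left _ _
      have hlen2 : ω₂.length ≤ n := by
        rw [hω₂, List.length_append, List.length_eraseIdx, List.length_drop, hlentake]
        rw [if_pos hkk]
        omega
      obtain ⟨δ, hδsub, hδred, hδprod⟩ := IHn ω₂ hlen2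
      exact ⟨δ, hδsub.trans hsub, hδred, by rw [hδprod, hprod]⟩

lemma le_step_up {w : W} {i : B} (h : cs.length w < cs.length (w * cs.simple i)) :
    BruhatLE cs w (w * cs.simple i) :=
  Relation.ReflTransGen.single ⟨cs.simple i, cs.isReflection_simple i, rfl, h⟩

lemma le_step_down {w : W} {i : B} (h : cs.length (w * cs.simple i) < cs.length w) :
    BruhatLE cs (w * cs.simple i) w := by
  refine Relation.ReflTransGen.single ⟨cs.simple i, cs.isReflection_simple i, ?_, ?_⟩
  · exact (cs.simple_mul_simple_cancel_right i).symm
  · exact h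

lemma bruhatABC (n : ℕ) :
    (∀ v : W, cs.length v = n → ∀ i : B, cs.length (v * cs.simple i) < n →
      ∀ u, BruhatLE cs u v → BruhatLE cs (u * cs.simple i) v)
    ∧ (∀ w : W, cs.length w = n → ∀ i : B, n < cs.length (w * cs.simple i) →
      ∀ u, BruhatLE cs u w → cs.length u < cs.length (u * cs.simple i) →
        BruhatLE cs (u * cs.simple i) (w * cs.simple i))
    ∧ (∀ ω : List B, cs.IsReduced ω → ω.length = n →
      ∀ δ, δ <+ ω → BruhatLE cs (π δ) (π ω)) := by
  induction n using Nat.strong_induction_on with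
  | _ n IH =>
  refine ⟨?_, ?_, ?_⟩
  · -- A
    intro v hv i hvs u hu
    have hneu := cs.length_mul_simple_ne u i
    by_cases hus : cs.length (u * cs.simple i) < cs.length u
    · exact (le_step_down cs hus).trans hu
    · have hus' : cs.length u < cs.length (u * cs.simple i) := by omega
      rcases Relation.ReflTransGen.cases_tail hu with heq | ⟨v', hu', hstep⟩
      · subst heq
        exact le_step_down cs (by omega)
      · obtain ⟨t, ht, hvt, hlt⟩ := hstep
        have hv't : v * t = v' := by rw [hvt, mul_assoc, ht.mul_self, mul_one]
        obtain ⟨γ, hγred, hγ⟩ := cs.exists_reduced_word' (v * cs.simple i)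
        have hγlen : γ.length = n - 1 := by
          have h := hγred
          unfold CoxeterSystem.IsReduced at h
          rw [← hγ] at h
          rcases cs.length_mul_simple v i with h2 | h2 <;> omega
        have hπω : π (γ ++ [i]) = v := by
          rw [cs.wordProd_append, cs.wordProd_singleton, ← hγ,
            cs.simple_mul_simple_cancel_right]
        have hωred : cs.IsReduced (γ ++ [i]) := by
          unfold CoxeterSystem.IsReduced
          rw [hπω, List.length_append, hγlen, hv]
          simp
          omega
        have hinvt : cs.length (π (γ ++ [i]) * t) < cs.length (π (γ ++ [i])) := by
          rw [hπω, hv't, hv]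
          omega
        obtain ⟨k, hk, hkey⟩ := strong_exchange cs hωred ht hinvt
        have hkey' : π ((γ ++ [i]).eraseIdx k) = v' := by rw [hkey, hπω, hv't]
        have hklen : k < γ.length + 1 := by simpa using hk
        by_cases hkγ : k < γ.length
        · have herase : (γ ++ [i]).eraseIdx k = γ.eraseIdx k ++ [i] :=
            List.eraseIdx_append_of_lt_length hkγ _
          have hv's : v' * cs.simple i = π (γ.eraseIdx k) := by
            rw [← hkey', herase, cs.wordProd_append, cs.wordProd_singleton,
              cs.simple_mul_simple_cancel_right]
          by_cases hd : cs.length (v' * cs.simple i) < cs.length v'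
          · have hA' := (IH (cs.length v') (by omega)).1 v' rfl i hd u hu'
            exact hA'.trans (Relation.ReflTransGen.single ⟨t, ht, hvt, hlt⟩)
          · have hd' : cs.length v' < cs.length (v' * cs.simple i) := by
              have := cs.length_mul_simple_ne v' i; omega
            have hB' := (IH (cs.length v') (by omega)).2.1 v' rfl i hd' u hu' hus'
            have hC := (IH (n - 1) (by omega)).2.2 γ hγred hγlen (γ.eraseIdx k)
              (List.eraseIdx_sublist _ _)
            have h1 : BruhatLE cs (v' * cs.simple i) (v * cs.simple i) := by
              rw [hv's, hγ]; exact hC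
            have h2 : BruhatLE cs (v * cs.simple i) v := le_step_down cs (by omega)
            exact hB'.trans (h1.trans h2)
        · have hkeq : k = γ.length := by omega
          have herase : (γ ++ [i]).eraseIdx k = γ := by
            rw [hkeq, List.eraseIdx_append_of_length_le (le_refl _)]
            simp
          have hv'eq : v' = v * cs.simple i := by rw [← hkey', herase, ← hγ]
          have hwlen : cs.length (v * cs.simple i) = n - 1 := by
            rcases cs.length_mul_simple v i with h2 | h2 <;> omega
          have hB' := (IH (n - 1) (by omega)).2.1 (v * cs.simple i) hwlen i
            (by rw [cs.simple_mul_simple_cancel_right, hv]; omega) u (hv'eq ▸ hu') hus'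
          rwa [cs.simple_mul_simple_cancel_right] at hB'
  · -- B
    intro w hw i hws u hu hus
    rcases Relation.ReflTransGen.cases_tail hu with heq | ⟨w', hu', hstep⟩
    · subst heq; exact Relation.ReflTransGen.refl
    · obtain ⟨t, ht, hwt, hlt⟩ := hstep
      by_cases hd : cs.length (w' * cs.simple i) < cs.length w'
      · have hA' := (IH (cs.length w') (by omega)).1 w' rfl i hd u hu'
        exact hA'.trans ((Relation.ReflTransGen.single
          (⟨t, ht, hwt, hlt⟩ : BruhatStep cs w' w)).trans (le_step_up cs (by omega)))
      · have hd' : cs.length w' < cs.length (w' * cs.simple i) := by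
          have := cs.length_mul_simple_ne w' i; omega
        have hB' := (IH (cs.length w') (by omega)).2.1 w' rfl i hd' u hu' hus
        refine hB'.trans (Relation.ReflTransGen.single
          ⟨cs.simple i * t * cs.simple i, ?_, ?_, ?_⟩)
        · have hc := ht.conj (cs.simple i)
          rwa [cs.inv_simple] at hc
        · rw [hwt]
          calc w' * t * cs.simple i
              = w' * (cs.simple i * cs.simple i) * t * cs.simple i := by
                rw [cs.simple_mul_simple_self, mul_one]
            _ = w' * cs.simple i * (cs.simple i * t * cs.simple i) := by group
        · have h1 : cs.length (w' * cs.simple i) = cs.length w' + 1 := by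
            rcases cs.length_mul_simple w' i with h2 | h2 <;> omega
          have h2 : cs.length (w * cs.simple i) = n + 1 := by
            rcases cs.length_mul_simple w i with h2 | h2 <;> omega
          omega
  · -- C
    intro ω hred hlen δ hsub
    rcases List.eq_nil_or_concat ω with rfl | ⟨γ, i, rfl⟩
    · rw [List.sublist_nil.mp hsub]
      exact Relation.ReflTransGen.refl
    · rw [List.concat_eq_append] at hsub hred hlen ⊢
      have hlen' : γ.length + 1 = n := by simpa using hlen
      have hπ : π (γ ++ [i]) = π γ * cs.simple i := by
        rw [cs.wordProd_append, cs.wordProd_singleton]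
      have hredlen : cs.length (π γ * cs.simple i) = γ.length + 1 := by
        have h := hred
        unfold CoxeterSystem.IsReduced at h
        rw [hπ] at h
        simpa using h
      have hγred : cs.IsReduced γ := by
        have hle := cs.length_wordProd_le γ
        unfold CoxeterSystem.IsReduced
        rcases cs.length_mul_simple (π γ) i with h2 | h2 <;> omega
      have hγl : cs.length (π γ) = γ.length := hγred
      have hstepup : cs.length (π γ) < cs.length (π γ * cs.simple i) := by omega
      rcases List.sublist_append_iff.mp hsub with ⟨l₁, l₂, rfl, h₁, h₂⟩
      rcases List.sublist_singleton.mp h₂ with rfl | rfl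
      · rw [List.append_nil]
        have hC := (IH (n - 1) (by omega)).2.2 γ hγred (by omega) l₁ h₁
        refine hC.trans ?_
        rw [hπ]
        exact le_step_up cs hstepup
      · have hC := (IH (n - 1) (by omega)).2.2 γ hγred (by omega) l₁ h₁
        rw [hπ, cs.wordProd_append, cs.wordProd_singleton]
        by_cases hd : cs.length (π l₁ * cs.simple i) < cs.length (π l₁)
        · exact (le_step_down cs hd).trans (hC.trans (le_step_up cs hstepup))
        · have hd' : cs.length (π l₁) < cs.length (π l₁ * cs.simple i) := by
            have := cs.length_mul_simple_ne (π l₁) i; omega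
          exact (IH (n - 1) (by omega)).2.1 (π γ) (by omega) i (by omega) (π l₁) hC hd'

lemma lemA {v u : W} {i : B} (hvs : cs.length (v * cs.simple i) < cs.length v)
    (hu : BruhatLE cs u v) : BruhatLE cs (u * cs.simple i) v :=
  (bruhatABC cs (cs.length v)).1 v rfl i hvs u hu

lemma lemB {w u : W} {i : B} (hws : cs.length w < cs.length (w * cs.simple i))
    (hu : BruhatLE cs u w) (hus : cs.length u < cs.length (u * cs.simple i)) :
    BruhatLE cs (u * cs.simple i) (w * cs.simple i) :=
  (bruhatABC cs (cs.length w)).2.1 w rfl i hws u hu hus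

lemma lift_or {u v : W} (i : B) (h : BruhatLE cs u v) :
    BruhatLE cs (u * cs.simple i) v ∨ BruhatLE cs (u * cs.simple i) (v * cs.simple i) := by
  by_cases hv : cs.length (v * cs.simple i) < cs.length v
  · exact Or.inl (lemA cs hv h)
  · have hv' : cs.length v < cs.length (v * cs.simple i) := by
      have := cs.length_mul_simple_ne v i; omega
    by_cases hu : cs.length (u * cs.simple i) < cs.length u
    · exact Or.inl ((le_step_down cs hu).trans h)
    · have hu' : cs.length u < cs.length (u * cs.simple i) := by
        have := cs.length_mul_simple_ne u i; omega
      exact Or.inr (lemB cs hv' h hu')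

lemma mem_parabolic_word {J : Set B} {a : W} (ha : a ∈ parabolic cs J) :
    ∃ l : List B, (∀ i ∈ l, i ∈ J) ∧ a = π l := by
  induction ha using Subgroup.closure_induction with
  | mem x hx =>
    obtain ⟨i, hi, rfl⟩ := hx
    exact ⟨[i], by simpa using hi, (cs.wordProd_singleton i).symm⟩
  | one => exact ⟨[], by simp, by simp⟩
  | mul x y hx hy ihx ihy =>
    obtain ⟨l1, h1, rfl⟩ := ihx
    obtain ⟨l2, h2, rfl⟩ := ihy
    refine ⟨l1 ++ l2, ?_, (cs.wordProd_append l1 l2).symm⟩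
    intro i hi
    rcases List.mem_append.mp hi with h | h
    · exact h1 i h
    · exact h2 i h
  | inv x hx ih =>
    obtain ⟨l, h1, rfl⟩ := ih
    exact ⟨l.reverse, fun i hi => h1 i (List.mem_reverse.mp hi), (cs.wordProd_reverse l).symm⟩

lemma chain_lift {J : Set B} : ∀ l : List B, (∀ i ∈ l, i ∈ J) → ∀ u v : W, BruhatLE cs u v →
    ∃ a' ∈ parabolic cs J, BruhatLE cs (u * π l) (v * a') := by
  intro l
  induction l with
  | nil =>
    intro _ u v huv
    exact ⟨1, one_mem _, by simpa using huv⟩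
  | cons i l ihl =>
    intro hl u v huv
    have hi : i ∈ J := hl i List.mem_cons_self
    have hil : ∀ j ∈ l, j ∈ J := fun j hj => hl j (List.mem_cons_of_mem _ hj)
    rcases lift_or cs i huv with h | h
    · obtain ⟨a', ha', hle⟩ := ihl hil (u * cs.simple i) v h
      refine ⟨a', ha', ?_⟩
      rwa [cs.wordProd_cons, ← mul_assoc]
    · obtain ⟨a', ha', hle⟩ := ihl hil (u * cs.simple i) (v * cs.simple i) h
      refine ⟨cs.simple i * a',
        mul_mem (Subgroup.subset_closure ⟨i, hi, rfl⟩) ha', ?_⟩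
      rw [cs.wordProd_cons, ← mul_assoc, ← mul_assoc]
      exact hle

theorem le_mul_of_minRep_le' (J : Set B)
    (x y mx my : W) (hmx : IsMinRep cs J x mx) (hmy : IsMinRep cs J y my)
    (h : BruhatLE cs mx my) :
    ∃ u ∈ parabolic cs J, BruhatLE cs x (y * u) := by
  have hax : mx⁻¹ * x ∈ parabolic cs J := by
    have h1 := inv_mem hmx.1
    rwa [mul_inv_rev, inv_inv] at h1
  obtain ⟨l, hl, hal⟩ := mem_parabolic_word cs hax
  obtain ⟨a', ha', hle⟩ := chain_lift cs l hl mx my h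
  refine ⟨(y⁻¹ * my) * a', mul_mem hmy.1 ha', ?_⟩
  rw [show y * (y⁻¹ * my * a') = my * a' from by group,
    show x = mx * π l from by rw [← hal]; group]
  exact hle

end

/-- If `x^J ≤ y^J` in the Bruhat order, then `x ≤ yu` for some `u ∈ W_J`. -/
theorem le_mul_of_minRep_le (cs : CoxeterSystem M W) (J : Set B)
    (x y mx my : W) (hmx : IsMinRep cs J x mx) (hmy : IsMinRep cs J y my)
    (h : BruhatLE cs mx my) :
    ∃ u ∈ parabolic cs J, BruhatLE cs x (y * u) :=
  le_mul_of_minRep_le' cs J x y mx my hmx hmy h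

end Paper
end
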